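/- arXiv:2107.12814 — 5 statements merged into one kernel-verified Lean document; each statement's English description precedes it below -/
import Mathlib

section
/- Let P : ℝ^n → ℝ be the evaluation of a homogeneous polynomial in n variables (all monomials of the same total degree). Let A ⊆ ℝ^n be measurable and x ∈ ℝ^n a point at which A has density one. Define φ : A \ {x} → ℝ by φ(y) = P((y − x)/‖y − x‖). Suppose that for every ε > 0 the set {y ∈ A \ {x} : |φ(y)| > ε} has density zero at x. Then P is identically zero. (This is the paper's Lemma 3.2 specialized to the abelian Carnot group ℝ^n, where dilations are scalar multiplications.) -/
open MeasureTheory Metric Filter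

noncomputable section

/-- `ℝ^n` with the Euclidean norm. -/
abbrev Euc (n : ℕ) := EuclideanSpace ℝ (Fin n)

/-- A set `S ⊆ ℝ^n` has density one at `x` if
`vol(S ∩ B(x,r))/vol(B(x,r)) → 1` as `r → 0⁺`. -/
def DensityOneAt {n : ℕ} (S : Set (Euc n)) (x : Euc n) : Prop :=
  Tendsto (fun r : ℝ => volume (S ∩ ball x r) / volume (ball x r))
    (nhdsWithin 0 (Set.Ioi 0)) (nhds 1)

/-- A set has density zero at `x` if its complement has density one at `x`. -/
def DensityZeroAt {n : ℕ} (S : Set (Euc n)) (x : Euc n) : Prop :=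
  DensityOneAt Sᶜ x

/-- Degree `|J|` of a multi-index. -/
def mdeg {n : ℕ} (J : Fin n → ℕ) : ℕ := ∑ i, J i

/-- Monomial `x^J = x₁^{j₁} ⋯ xₙ^{jₙ}`. -/
def mpow {n : ℕ} (x : Euc n) (J : Fin n → ℕ) : ℝ := ∏ i, (x i) ^ (J i)

/-- `J! = j₁! ⋯ jₙ!`. -/
def Jfact {n : ℕ} (J : Fin n → ℕ) : ℕ := ∏ i, Nat.factorial (J i)

/-- `p : ℝ^n → ℝ` is a polynomial function of (total) degree at most `k`. -/
def IsPolyFun (n k : ℕ) (p : Euc n → ℝ) : Prop :=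
  ∃ P : MvPolynomial (Fin n) ℝ, P.totalDegree ≤ k ∧
    ∀ x : Euc n, p x = MvPolynomial.eval (fun i => x i) P

/-- `f : D → ℝ` is approximately differentiable of order `k` at `x₀` (a density point
of `D`) with polynomial `p`: `p` has degree at most `k` and for every `ε > 0` the set
`{x ∈ D : |f x − p x| > ε ‖x − x₀‖^k}` has density zero at `x₀`. -/
def ApproxDiffAt {n : ℕ} (k : ℕ) (D : Set (Euc n)) (f : Euc n → ℝ)
    (x₀ : Euc n) (p : Euc n → ℝ) : Prop :=
  DensityOneAt D x₀ ∧ IsPolyFun n k p ∧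
    ∀ ε : ℝ, 0 < ε →
      DensityZeroAt {x | x ∈ D ∧ ε * ‖x - x₀‖ ^ k < |f x - p x|} x₀

/-- `f : D → ℝ` has an approximate `(k−1)`-Taylor polynomial at `x₀` (a density point
of `D`) with polynomial `p`: `p` has degree at most `k−1` and there is `M > 0` such that
`{x ∈ D : |f x − p x| > M ‖x − x₀‖^k}` has density zero at `x₀`. -/
def HasApproxTaylorAt {n : ℕ} (k : ℕ) (D : Set (Euc n)) (f : Euc n → ℝ)
    (x₀ : Euc n) (p : Euc n → ℝ) : Prop :=
  DensityOneAt D x₀ ∧ IsPolyFun n (k - 1) p ∧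
    ∃ M : ℝ, 0 < M ∧
      DensityZeroAt {x | x ∈ D ∧ M * ‖x - x₀‖ ^ k < |f x - p x|} x₀

/-- The finset of multi-indices `J` with `|J| ≤ k`. -/
def multiIdxLe (n k : ℕ) : Finset (Fin n → ℕ) :=
  (Fintype.piFinset fun _ : Fin n => Finset.range (k+1)).filter fun J => mdeg J ≤ k

/-- The finset of multi-indices `J` with `|J| < k` (i.e. `|J| ≤ k−1`). -/
def multiIdxLt (n k : ℕ) : Finset (Fin n → ℕ) :=
  (Fintype.piFinset fun _ : Fin n => Finset.range (k+1)).filter fun J => mdeg J < k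

/-- Partial derivative `∂g/∂xᵢ` (as a line derivative in the direction `eᵢ`). -/
def pd {n : ℕ} (i : Fin n) (g : Euc n → ℝ) : Euc n → ℝ :=
  fun x => lineDeriv ℝ g x (EuclideanSpace.single i 1)

/-- The list of directions `(1,…,1,2,…,2,…)` (direction `i` repeated `J i` times)
encoding the iterated partial derivative `∂^{|J|}/∂x₁^{j₁}⋯∂xₙ^{jₙ}`. -/
def multiList (n : ℕ) (J : Fin n → ℕ) : List (Fin n) :=
  (List.finRange n).flatMap fun i => List.replicate (J i) i

/-- Iterated partial derivatives along a list of coordinate directions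
(the head of the list is the outermost derivative). -/
def iterD {n : ℕ} : List (Fin n) → (Euc n → ℝ) → (Euc n → ℝ)
  | [], g => g
  | i :: L, g => pd i (iterD L g)

/-- The iterated partial derivatives along the list `L` all exist at every point. -/
def iterDExists {n : ℕ} : List (Fin n) → (Euc n → ℝ) → Prop
  | [], _ => True
  | i :: L, g => iterDExists L g ∧
      ∀ x : Euc n, LineDifferentiableAt ℝ (iterD L g) x (EuclideanSpace.single i 1)

/-- `D^J u = ∂^{|J|}u/∂x₁^{j₁}⋯∂xₙ^{jₙ}`. -/
def DJ {n : ℕ} (J : Fin n → ℕ) (u : Euc n → ℝ) : Euc n → ℝ := iterD (multiList n J) u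

/-- The Taylor polynomial of `u` of degree `k−1` centered at `x₀`:
`P_{x₀}(y) = Σ_{|I| ≤ k−1} D^I u(x₀) (y − x₀)^I / I!`. -/
def TaylorPoly {n : ℕ} (k : ℕ) (u : Euc n → ℝ) (x₀ : Euc n) : Euc n → ℝ :=
  fun y => ∑ I ∈ multiIdxLt n k, DJ I u x₀ * mpow (y - x₀) I / (Jfact I : ℝ)

/-- `u` belongs to `Lip(k, ℝ^n)` with constant `M`: all partial derivatives `D^J u`
with `|J| ≤ k−1` exist at every point, and for all such `J` and all `x, x₀`,
`|D^J u(x₀)| ≤ M` and `|D^J u(x) − D^J P_{x₀}(x)| ≤ M ‖x − x₀‖^{k−|J|}`. -/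
def MemLip (n k : ℕ) (M : ℝ) (u : Euc n → ℝ) : Prop :=
  (∀ J : Fin n → ℕ, mdeg J < k → iterDExists (multiList n J) u) ∧
  ∀ J : Fin n → ℕ, mdeg J < k → ∀ x x₀ : Euc n,
    |DJ J u x₀| ≤ M ∧
    |DJ J u x - DJ J (TaylorPoly k u x₀) x| ≤ M * ‖x - x₀‖ ^ (k - mdeg J)

/-- Truncation of `f` at level `h`: equals `f` where `−h < f < h`, equals `h` where
`f ≥ h`, and equals `−h` where `f ≤ −h`. -/
def trunc {n : ℕ} (h : ℕ) (f : Euc n → ℝ) : Euc n → ℝ :=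
  fun x => if (h : ℝ) ≤ f x then (h : ℝ) else if f x ≤ -(h : ℝ) then -(h : ℝ) else f x


open Pointwise

lemma homog_eval_mul {n d : ℕ} {P : MvPolynomial (Fin n) ℝ} (hP : P.IsHomogeneous d)
    (c : ℝ) (v : Fin n → ℝ) :
    MvPolynomial.eval (fun i => c * v i) P = c ^ d * MvPolynomial.eval v P := by
  rw [MvPolynomial.eval_eq', MvPolynomial.eval_eq', Finset.mul_sum]
  refine Finset.sum_congr rfl fun s hs => ?_
  have hdeg : ∑ i, s i = d := by
    have h1 := hP (MvPolynomial.mem_support_iff.mp hs)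
    change Finsupp.weight (fun _ => 1) s = d at h1
    rw [← Finsupp.degree_eq_weight_one] at h1
    rw [← h1, Finsupp.degree]
    exact (Finset.sum_subset (Finset.subset_univ _) (by
      intro i _ hi
      simpa using Finsupp.notMem_support_iff.mp hi)).symm
  simp only [mul_pow, Finset.prod_mul_distrib, Finset.prod_pow_eq_pow_sum, hdeg]
  ring

lemma normalize_smul_eq {n : ℕ} (v : Euc n) {t : ℝ} (ht : 0 < t) :
    ‖t • v‖⁻¹ • (t • v) = ‖v‖⁻¹ • v := by
  rw [norm_smul, Real.norm_eq_abs, abs_of_pos ht, mul_inv, smul_smul, mul_assoc,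
    mul_comm _ t, ← mul_assoc, inv_mul_cancel₀ ht.ne', one_mul]

/-- **Lemma 3.2** (abelian case). If `P` is a homogeneous polynomial, `A` has density
one at `x`, and `φ(y) = P((y−x)/‖y−x‖)` has approximate limit `0` at `x` along `A`,
then `P` is identically zero. -/
theorem stmt6 (n : ℕ) (hn : 0 < n) (d : ℕ) (P : MvPolynomial (Fin n) ℝ)
    (hP : P.IsHomogeneous d)
    (A : Set (Euc n)) (hA : MeasurableSet A) (x : Euc n) (hx : DensityOneAt A x)
    (hphi : ∀ ε : ℝ, 0 < ε →
      DensityZeroAt {y : Euc n | y ∈ A \ {x} ∧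
        ε < |MvPolynomial.eval (fun i => (‖y - x‖⁻¹ • (y - x)) i) P|} x) :
    ∀ y : Euc n, MvPolynomial.eval (fun i => y i) P = 0 := by
  by_contra hcon
  push_neg at hcon
  obtain ⟨y, hy⟩ := hcon
  -- obtain a unit vector where P is nonzero
  obtain ⟨u, hu1, hu⟩ : ∃ u : Euc n, ‖u‖ = 1 ∧
      MvPolynomial.eval (fun i => u i) P ≠ 0 := by
    rcases eq_or_ne y 0 with rfl | hy0
    · refine ⟨EuclideanSpace.single (⟨0, hn⟩ : Fin n) (1:ℝ), by simp, fun h => hy ?_⟩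
      have h0 : (fun i => (0 : Euc n) i) =
          (fun i => (0:ℝ) * (EuclideanSpace.single (⟨0, hn⟩ : Fin n) (1:ℝ)) i) := by
        funext i; simp
      rw [h0, homog_eval_mul hP, h, mul_zero]
    · refine ⟨‖y‖⁻¹ • y, norm_smul_inv_norm hy0, fun h => hy ?_⟩
      have h0 : (fun i => (‖y‖⁻¹ • y) i) = (fun i => ‖y‖⁻¹ * y i) := by
        funext i; simp
      rw [h0, homog_eval_mul hP] at h
      rcases mul_eq_zero.mp h with h' | h'
      · exact absurd h' (pow_ne_zero _ (inv_ne_zero (norm_ne_zero_iff.mpr hy0)))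
      · exact h'
  have hu0 : u ≠ 0 := norm_ne_zero_iff.mp (hu1 ▸ one_ne_zero)
  set F : Euc n → ℝ := fun v => MvPolynomial.eval (fun i => v i) P with hF_def
  have hFcont : Continuous F := by
    have h1 : Continuous fun v : Euc n => (fun i => v i : Fin n → ℝ) :=
      continuous_pi fun i => PiLp.continuous_apply 2 _ i
    exact (MvPolynomial.continuous_eval P).comp h1
  set ε : ℝ := |F u| / 2 with hε_def
  have hε : 0 < ε := by
    have : 0 < |F u| := abs_pos.mpr hu
    simp only [hε_def]; linarith
  -- the cone
  set C₀ : Set (Euc n) := {v | v ≠ 0 ∧ ε < |F (‖v‖⁻¹ • v)|} with hC₀_def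
  have hC₀cone : ∀ (v : Euc n) {t : ℝ}, 0 < t → (t • v ∈ C₀ ↔ v ∈ C₀) := by
    intro v t ht
    simp only [hC₀_def, Set.mem_setOf_eq, smul_ne_zero_iff, normalize_smul_eq v ht]
    constructor
    · rintro ⟨⟨-, h1⟩, h2⟩; exact ⟨h1, h2⟩
    · rintro ⟨h1, h2⟩; exact ⟨⟨ht.ne', h1⟩, h2⟩
  have hC₀open : IsOpen C₀ := by
    have hG : ContinuousOn (fun v : Euc n => F (‖v‖⁻¹ • v)) {v : Euc n | v ≠ 0} := by
      apply hFcont.comp_continuousOn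
      exact ContinuousOn.smul
        ((continuous_norm.continuousOn).inv₀ fun v hv => norm_ne_zero_iff.mpr hv)
        continuousOn_id
    have : C₀ = {v : Euc n | v ≠ 0} ∩ (fun v : Euc n => F (‖v‖⁻¹ • v)) ⁻¹' {t : ℝ | ε < |t|} := by
      ext v; simp [hC₀_def, and_comm]
    rw [this]
    exact hG.isOpen_inter_preimage isOpen_ne
      (isOpen_lt continuous_const continuous_abs)
  have hw : ((2:ℝ)⁻¹ • u) ∈ C₀ ∩ ball (0 : Euc n) 1 := by
    constructor
    · refine ⟨smul_ne_zero (by norm_num) hu0, ?_⟩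
      rw [normalize_smul_eq u (by norm_num : (0:ℝ) < 2⁻¹)]
      rw [hu1]; simp only [inv_one, one_smul]
      simp only [hε_def]
      have : 0 < |F u| := abs_pos.mpr hu
      linarith
    · rw [mem_ball_zero_iff, norm_smul, hu1, mul_one, Real.norm_eq_abs,
        abs_of_pos (by norm_num : (0:ℝ) < 2⁻¹)]
      norm_num
  -- measurability of the exceptional set
  have hgmeas : Measurable fun z : Euc n => F (‖z - x‖⁻¹ • (z - x)) := by
    apply hFcont.measurable.comp
    exact Measurable.smul
      (((continuous_id.sub continuous_const).norm.measurable).inv)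
      ((continuous_id.sub continuous_const).measurable)
  set S : Set (Euc n) := {z : Euc n | z ∈ A \ {x} ∧
      ε < |MvPolynomial.eval (fun i => (‖z - x‖⁻¹ • (z - x)) i) P|} with hS_def
  have hSmeas : MeasurableSet S :=
    (hA.diff (measurableSet_singleton x)).inter
      (measurableSet_lt measurable_const hgmeas.abs)
  have hS : DensityZeroAt S x := hphi ε hε
  haveI : Nontrivial (Euc n) := ⟨⟨u, 0, hu0⟩⟩
  set m : ENNReal := volume (C₀ ∩ ball (0:Euc n) 1) with hm_def
  have hm0 : 0 < m := (hC₀open.inter isOpen_ball).measure_pos volume ⟨_, hw⟩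
  have hmtop : m ≠ ⊤ :=
    ((measure_mono Set.inter_subset_right).trans_lt measure_ball_lt_top).ne
  set B₁ : ENNReal := volume (ball (0:Euc n) 1) with hB₁_def
  have hB₁0 : 0 < B₁ := measure_ball_pos _ _ one_pos
  have hB₁top : B₁ ≠ ⊤ := measure_ball_lt_top.ne
  have hfr : Module.finrank ℝ (Euc n) = n := finrank_euclideanSpace_fin
  -- cone measure identity
  have hCone : ∀ r : ℝ, 0 < r →
      volume ({z : Euc n | z - x ∈ C₀} ∩ ball x r) = ENNReal.ofReal (r ^ n) * m := by
    intro r hr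
    have hset : {z : Euc n | z - x ∈ C₀} ∩ ball x r
        = x +ᵥ (r • (C₀ ∩ ball (0:Euc n) 1)) := by
      ext z
      rw [Set.mem_vadd_set_iff_neg_vadd_mem]
      have hzx : -x +ᵥ z = z - x := by
        rw [vadd_eq_add, neg_add_eq_sub]
      rw [hzx, Set.mem_smul_set_iff_inv_smul_mem₀ hr.ne']
      simp only [Set.mem_inter_iff, Set.mem_setOf_eq, mem_ball, mem_ball_zero_iff]
      rw [hC₀cone (z - x) (inv_pos.mpr hr), dist_eq_norm, dist_zero_right, norm_smul,
        Real.norm_eq_abs, abs_of_pos (inv_pos.mpr hr)]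
      constructor
      · rintro ⟨h1, h2⟩
        refine ⟨h1, ?_⟩
        rw [inv_mul_lt_iff₀ hr, mul_one]
        exact h2
      · rintro ⟨h1, h2⟩
        refine ⟨h1, ?_⟩
        rw [inv_mul_lt_iff₀ hr, mul_one] at h2
        exact h2
    rw [hset, measure_vadd, Measure.addHaar_smul, hfr,
      abs_of_nonneg (pow_nonneg hr.le n)]
  have hBall : ∀ r : ℝ, 0 < r →
      volume (ball x r) = ENNReal.ofReal (r ^ n) * B₁ := by
    intro r hr
    rw [Measure.addHaar_ball volume x hr.le, hfr]
  -- pass to reals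
  set m' : ℝ := m.toReal with hm'_def
  have hm'0 : 0 < m' := ENNReal.toReal_pos hm0.ne' hmtop
  set B₁' : ℝ := B₁.toReal with hB₁'_def
  have hB₁'0 : 0 < B₁' := ENNReal.toReal_pos hB₁0.ne' hB₁top
  set η : ℝ := m' / (4 * B₁') with hη_def
  have hη0 : 0 < η := by positivity
  have hη1 : 1 - η < 1 := by linarith
  have htA : Tendsto (fun r : ℝ =>
      (volume (A ∩ ball x r) / volume (ball x r)).toReal) (nhdsWithin 0 (Set.Ioi 0)) (nhds 1) := by
    have h := (ENNReal.tendsto_toReal (by norm_num : (1:ENNReal) ≠ ⊤)).comp hx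
    simp only [ENNReal.toReal_one] at h
    exact h
  have htS : Tendsto (fun r : ℝ =>
      (volume (Sᶜ ∩ ball x r) / volume (ball x r)).toReal) (nhdsWithin 0 (Set.Ioi 0)) (nhds 1) := by
    have h := (ENNReal.tendsto_toReal (by norm_num : (1:ENNReal) ≠ ⊤)).comp hS
    simp only [ENNReal.toReal_one] at h
    exact h
  have h1 := htA.eventually (eventually_gt_nhds hη1)
  have h2 := htS.eventually (eventually_gt_nhds hη1)
  have h3 : ∀ᶠ r in nhdsWithin (0:ℝ) (Set.Ioi 0), r ∈ Set.Ioi (0:ℝ) :=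
    eventually_mem_nhdsWithin
  obtain ⟨r, hr1, hr2, hr0'⟩ := (h1.and (h2.and h3)).exists
  have hr0 : 0 < r := hr0'
  have hrn : 0 < r ^ n := pow_pos hr0 n
  set B : Set (Euc n) := ball x r with hB_def
  have hvBtop : volume B ≠ ⊤ := measure_ball_lt_top.ne
  have hvB0 : volume B ≠ 0 := (measure_ball_pos _ _ hr0).ne'
  set vB' : ℝ := (volume B).toReal with hvB'_def
  have hvB'0 : 0 < vB' := ENNReal.toReal_pos hvB0 hvBtop
  have hvB'eq : vB' = r ^ n * B₁' := by
    rw [hvB'_def, hB_def, hBall r hr0, ENNReal.toReal_mul,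
      ENNReal.toReal_ofReal (pow_nonneg hr0.le n)]
  -- finiteness of pieces
  have hfin : ∀ T : Set (Euc n), volume (T ∩ B) ≠ ⊤ := fun T =>
    ((measure_mono Set.inter_subset_right).trans_lt measure_ball_lt_top).ne
  -- complement identity
  have key : ∀ T : Set (Euc n), MeasurableSet T →
      (volume (Tᶜ ∩ B)).toReal = vB' - (volume (T ∩ B)).toReal := by
    intro T hT
    have h := measure_inter_add_diff (μ := volume) B hT
    rw [Set.diff_eq, Set.inter_comm B T, Set.inter_comm B Tᶜ] at h
    have h' := congrArg ENNReal.toReal h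
    rw [ENNReal.toReal_add (hfin T) (hfin Tᶜ)] at h'
    rw [hvB'_def]
    linarith [h'.symm]
  -- ratio bounds
  have ha' : (1 - η) * vB' < (volume (A ∩ B)).toReal := by
    rw [ENNReal.toReal_div] at hr1
    exact (lt_div_iff₀ hvB'0).mp hr1
  have hs' : (1 - η) * vB' < (volume (Sᶜ ∩ B)).toReal := by
    rw [ENNReal.toReal_div] at hr2
    exact (lt_div_iff₀ hvB'0).mp hr2
  -- cone inclusion
  have hsub : {z : Euc n | z - x ∈ C₀} ∩ B ⊆ (S ∩ B) ∪ (Aᶜ ∩ B) := by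
    rintro z ⟨hzC, hzB⟩
    obtain ⟨hzne, hzlt⟩ := hzC
    by_cases hzA : z ∈ A
    · left
      exact ⟨⟨⟨hzA, fun h => hzne (by rw [Set.mem_singleton_iff] at h; rw [h, sub_self])⟩,
        hzlt⟩, hzB⟩
    · right
      exact ⟨hzA, hzB⟩
  have hle : ENNReal.ofReal (r ^ n) * m ≤ volume (S ∩ B) + volume (Aᶜ ∩ B) := by
    rw [← hCone r hr0]
    exact (measure_mono hsub).trans (measure_union_le _ _)
  have hle' : r ^ n * m' ≤ (volume (S ∩ B)).toReal + (volume (Aᶜ ∩ B)).toReal := by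
    have h := ENNReal.toReal_mono
      (by exact ENNReal.add_ne_top.mpr ⟨hfin S, hfin Aᶜ⟩) hle
    rwa [ENNReal.toReal_mul, ENNReal.toReal_ofReal (pow_nonneg hr0.le n),
      ENNReal.toReal_add (hfin S) (hfin Aᶜ)] at h
  have hSval : (volume (S ∩ B)).toReal = vB' - (volume (Sᶜ ∩ B)).toReal := by
    have := key S hSmeas
    linarith
  have hAval : (volume (Aᶜ ∩ B)).toReal = vB' - (volume (A ∩ B)).toReal := key A hA
  have hfinal : m' < 2 * η * B₁' := by
    have h4 : r ^ n * m' < 2 * η * vB' := by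
      rw [hSval, hAval] at hle'
      linarith
    rw [hvB'eq] at h4
    nlinarith
  rw [hη_def] at hfinal
  have : 2 * (m' / (4 * B₁')) * B₁' = m' / 2 := by
    field_simp
    ring
  rw [this] at hfinal
  linarith
end
end

section
/- (Uniqueness of approximate derivatives.) Let D ⊆ ℝ^n be measurable, f : D → ℝ measurable, k a nonnegative integer, and x₀ ∈ D a point at which D has density one. Suppose p and q are both polynomial functions ℝ^n → ℝ of degree at most k such that f is approximately differentiable of order k at x₀ with polynomial p, and also with polynomial q. Then p = q. (This is part (2) of the paper's Proposition 3.3 specialized to the abelian Carnot group ℝ^n.) -/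
open MeasureTheory Metric Filter

noncomputable section

section AuxUniq

open MvPolynomial
open scoped Pointwise

lemma coord_abs_le {n : ℕ} (y : Euc n) (i : Fin n) : |y i| ≤ ‖y‖ := by
  rw [EuclideanSpace.norm_eq, ← Real.sqrt_sq_eq_abs]
  apply Real.sqrt_le_sqrt
  rw [← Finset.sum_erase_add _ _ (Finset.mem_univ i)]
  have : ‖y i‖ ^ 2 = y i ^ 2 := by simp [Real.norm_eq_abs, sq_abs]
  rw [this]
  nlinarith [Finset.sum_nonneg (fun j (_ : j ∈ Finset.univ.erase i) => sq_nonneg (‖y j‖))]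

lemma continuous_evalE {n : ℕ} (P : MvPolynomial (Fin n) ℝ) :
    Continuous fun y : Euc n => eval (fun i => y i) P := by
  simp only [eval_eq']
  refine continuous_finset_sum _ fun d _ => Continuous.mul continuous_const ?_
  exact continuous_finset_prod _ fun i _ => (EuclideanSpace.proj (𝕜 := ℝ) i).continuous.pow _

lemma homog_support_deg {n j : ℕ} {P : MvPolynomial (Fin n) ℝ} (h : P.IsHomogeneous j)
    {d : Fin n →₀ ℕ} (hd : d ∈ P.support) : (d.sum fun _ e => e) = j := by
  by_contra hne
  have := h.coeff_eq_zero (d := d) (by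
    rw [Finsupp.degree]
    exact hne)
  exact (mem_support_iff.1 hd) this

lemma homog_eval_bound {n j : ℕ} (P : MvPolynomial (Fin n) ℝ) (h : P.IsHomogeneous j) :
    ∃ C : ℝ, 0 ≤ C ∧ ∀ y : Euc n, |eval (fun i => y i) P| ≤ C * ‖y‖ ^ j := by
  refine ⟨∑ d ∈ P.support, |coeff d P|, Finset.sum_nonneg fun _ _ => abs_nonneg _, fun y => ?_⟩
  rw [eval_eq]
  refine (Finset.abs_sum_le_sum_abs _ _).trans ?_
  rw [Finset.sum_mul]
  refine Finset.sum_le_sum fun d hd => ?_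
  rw [abs_mul]
  refine mul_le_mul_of_nonneg_left ?_ (abs_nonneg _)
  rw [Finset.abs_prod]
  calc ∏ i ∈ d.support, |y i ^ d i| ≤ ∏ i ∈ d.support, ‖y‖ ^ d i := by
        refine Finset.prod_le_prod (fun _ _ => abs_nonneg _) fun i _ => ?_
        rw [abs_pow]
        exact pow_le_pow_left₀ (abs_nonneg _) (coord_abs_le y i) _
    _ = ‖y‖ ^ j := by
        rw [Finset.prod_pow_eq_pow_sum]
        congr 1
        simpa [Finsupp.sum] using homog_support_deg h hd

lemma homog_eval_smul {n j : ℕ} (P : MvPolynomial (Fin n) ℝ) (h : P.IsHomogeneous j)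
    (r : ℝ) (y : Euc n) :
    eval (fun i => (r • y) i) P = r ^ j * eval (fun i => y i) P := by
  rw [eval_eq, eval_eq, Finset.mul_sum]
  refine Finset.sum_congr rfl fun d hd => ?_
  have hsm : ∀ i : Fin n, (r • y) i = r * y i := fun i => rfl
  simp_rw [hsm, mul_pow, Finset.prod_mul_distrib, Finset.prod_pow_eq_pow_sum]
  have hdeg : (∑ i ∈ d.support, d i) = j := by simpa [Finsupp.sum] using homog_support_deg h hd
  rw [hdeg]; ring

lemma tdeg_shift {n : ℕ} (R : MvPolynomial (Fin n) ℝ) (c : Fin n → ℝ) :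
    (aeval (fun i => X i + C (c i)) R).totalDegree ≤ R.totalDegree := by
  conv_lhs => rw [← support_sum_monomial_coeff R]
  rw [map_sum]
  refine (totalDegree_finset_sum _ _).trans ?_
  refine Finset.sup_le fun d hd => ?_
  rw [aeval_monomial]
  refine (totalDegree_mul _ _).trans ?_
  have h1 : (algebraMap ℝ (MvPolynomial (Fin n) ℝ) (coeff d R)).totalDegree = 0 :=
    totalDegree_C _
  rw [h1, zero_add]
  refine le_trans ?_ (le_totalDegree hd)
  rw [Finsupp.prod]
  refine (totalDegree_finset_prod _ _).trans ?_
  rw [Finsupp.sum]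
  refine Finset.sum_le_sum fun i _ => ?_
  refine (totalDegree_pow _ _).trans ?_
  have hX : (X (R := ℝ) i + C (c i)).totalDegree ≤ 1 := by
    refine (totalDegree_add _ _).trans ?_
    simp [totalDegree_X, totalDegree_C]
  nlinarith [hX]

lemma eval_shift {n : ℕ} (R : MvPolynomial (Fin n) ℝ) (c : Fin n → ℝ) (y : Fin n → ℝ) :
    eval y (aeval (fun i => X i + C (c i)) R) = eval (fun i => y i + c i) R := by
  induction R using MvPolynomial.induction_on with
  | C a => simp
  | add p q hp hq => simp only [map_add, hp, hq]
  | mul_X p i hp => simp only [map_mul, aeval_X, eval_add, eval_X, eval_C, hp]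

lemma vball_ne_zero {n : ℕ} (x : Euc n) {r : ℝ} (hr : 0 < r) : volume (ball x r) ≠ 0 :=
  (measure_ball_pos volume x hr).ne'

lemma vball_ne_top {n : ℕ} (x : Euc n) (r : ℝ) : volume (ball x r) ≠ ⊤ :=
  measure_ball_lt_top.ne

lemma compl_ratio_tendsto_zero {n : ℕ} {A : Set (Euc n)} (hA : MeasurableSet A)
    {x₀ : Euc n} (h : DensityOneAt A x₀) :
    Tendsto (fun r : ℝ => volume (Aᶜ ∩ ball x₀ r) / volume (ball x₀ r))
      (nhdsWithin 0 (Set.Ioi 0)) (nhds 0) := by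
  have key : ∀ r : ℝ, 0 < r →
      volume (Aᶜ ∩ ball x₀ r) / volume (ball x₀ r)
        = 1 - volume (A ∩ ball x₀ r) / volume (ball x₀ r) := by
    intro r hr
    have hsub : A ∩ ball x₀ r ⊆ ball x₀ r := Set.inter_subset_right
    have hdiff : Aᶜ ∩ ball x₀ r = ball x₀ r \ (A ∩ ball x₀ r) := by
      ext z; simp only [Set.mem_inter_iff, Set.mem_compl_iff, Set.mem_diff]; tauto
    have hm : volume (Aᶜ ∩ ball x₀ r) = volume (ball x₀ r) - volume (A ∩ ball x₀ r) := by
      rw [hdiff]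
      exact measure_diff hsub (hA.inter measurableSet_ball).nullMeasurableSet
        (ne_top_of_le_ne_top (vball_ne_top x₀ r) (measure_mono hsub))
    rw [hm, ENNReal.sub_div fun _ _ => vball_ne_zero x₀ hr,
      ENNReal.div_self (vball_ne_zero x₀ hr) (vball_ne_top x₀ r)]
  have h2 : Tendsto (fun r : ℝ => 1 - volume (A ∩ ball x₀ r) / volume (ball x₀ r))
      (nhdsWithin 0 (Set.Ioi 0)) (nhds 0) := by
    have h0 : (0 : ENNReal) = 1 - 1 := by simp
    rw [h0]
    exact ENNReal.Tendsto.sub tendsto_const_nhds h (Or.inl ENNReal.one_ne_top)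
  refine h2.congr' ?_
  filter_upwards [self_mem_nhdsWithin] with r hr
  exact (key r hr).symm

lemma dz_ratio_tendsto_zero {n : ℕ} {S : Set (Euc n)} (hS : MeasurableSet S)
    {x₀ : Euc n} (h : DensityZeroAt S x₀) :
    Tendsto (fun r : ℝ => volume (S ∩ ball x₀ r) / volume (ball x₀ r))
      (nhdsWithin 0 (Set.Ioi 0)) (nhds 0) := by
  simpa [compl_compl] using compl_ratio_tendsto_zero hS.compl h

lemma Sp_measurable {n : ℕ} {D : Set (Euc n)} (hD : MeasurableSet D)
    {f : Euc n → ℝ} (hf : Measurable (D.restrict f)) (g : Euc n → ℝ) (hg : Continuous g)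
    (φ : Euc n → ℝ) (hφ : Continuous φ) :
    MeasurableSet {x : Euc n | x ∈ D ∧ φ x < |f x - g x|} := by
  have hemb : MeasurableEmbedding ((↑) : D → Euc n) := MeasurableEmbedding.subtype_coe hD
  have hset : MeasurableSet {y : D | φ (y : Euc n) < |D.restrict f y - g (y : Euc n)|} := by
    apply measurableSet_lt
    · exact (hφ.measurable).comp measurable_subtype_coe
    · exact (hf.sub ((hg.measurable).comp measurable_subtype_coe)).abs
  have heq : {x : Euc n | x ∈ D ∧ φ x < |f x - g x|}
      = (↑) '' {y : D | φ (y : Euc n) < |D.restrict f y - g (y : Euc n)|} := by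
    ext x
    simp only [Set.mem_setOf_eq, Set.mem_image]
    constructor
    · rintro ⟨hxD, hlt⟩; exact ⟨⟨x, hxD⟩, hlt, rfl⟩
    · rintro ⟨⟨z, hz⟩, hlt, rfl⟩; exact ⟨hz, hlt⟩
  rw [heq]
  exact hemb.measurableSet_image.2 hset

lemma scaled_inter_measure {n : ℕ} {W : Set (Euc n)}
    (hWs : ∀ (r : ℝ), 0 < r → r • W = W) {r : ℝ} (hr : 0 < r) :
    volume (W ∩ ball (0 : Euc n) r)
      = ENNReal.ofReal (r ^ n) * volume (W ∩ ball (0 : Euc n) 1) := by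
  have hball : (ball (0 : Euc n) r) = r • ball (0 : Euc n) 1 := by
    rw [smul_ball hr.ne' (0 : Euc n) 1, smul_zero, Real.norm_eq_abs, abs_of_pos hr, mul_one]
  have heq : W ∩ ball (0 : Euc n) r = r • (W ∩ ball (0 : Euc n) 1) := by
    rw [Set.smul_set_inter₀ hr.ne', hWs r hr, ← hball]
  rw [heq, Measure.addHaar_smul_of_nonneg volume hr.le, finrank_euclideanSpace_fin]

end AuxUniq

section MainUniq

open MvPolynomial
open scoped Pointwise

set_option maxHeartbeats 2000000 in
theorem stmt8' (n : ℕ) (hn : 0 < n) (D : Set (Euc n)) (hD : MeasurableSet D)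
    (f : Euc n → ℝ) (hf : Measurable (D.restrict f)) (k : ℕ)
    (x₀ : Euc n) (hx₀ : x₀ ∈ D) (hdens : DensityOneAt D x₀)
    (p q : Euc n → ℝ)
    (hp : ApproxDiffAt k D f x₀ p) (hq : ApproxDiffAt k D f x₀ q) :
    p = q := by
  classical
  obtain ⟨-, ⟨P, hPd, hPe⟩, hp3⟩ := hp
  obtain ⟨-, ⟨P', hP'd, hP'e⟩, hq3⟩ := hq
  by_contra hne
  have hRe : ∀ x : Euc n, eval (fun i => x i) (P - P') = p x - q x := by
    intro x; rw [map_sub, ← hPe x, ← hP'e x]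
  have hRd : (P - P').totalDegree ≤ k := by
    rw [sub_eq_add_neg]
    refine (totalDegree_add _ _).trans ?_
    rw [totalDegree_neg]
    exact max_le hPd hP'd
  obtain ⟨Q, hQd, hQe⟩ : ∃ Q : MvPolynomial (Fin n) ℝ, Q.totalDegree ≤ k ∧
      ∀ y : Euc n, eval (fun i => y i) Q = p (x₀ + y) - q (x₀ + y) := by
    refine ⟨aeval (fun i => X i + C (x₀ i)) (P - P'), (tdeg_shift _ _).trans hRd, ?_⟩
    intro y
    rw [eval_shift]
    have hco : (fun i => y i + x₀ i) = (fun i => (x₀ + y) i) := by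
      funext i; simp [add_comm]
    rw [hco]
    exact hRe (x₀ + y)
  have hxx : ∀ x : Euc n, x₀ + (x - x₀) = x := fun x => by abel
  have hQx : ∀ x : Euc n, eval (fun i => (x - x₀) i) Q = p x - q x := by
    intro x
    rw [hQe (x - x₀), hxx]
  have hQ0 : Q ≠ 0 := by
    intro h0
    apply hne
    funext x
    have h1 := hQx x
    rw [h0, map_zero] at h1
    linarith [h1.symm]
  have hex : ∃ j, homogeneousComponent j Q ≠ 0 := by
    by_contra hall
    push_neg at hall
    apply hQ0
    have hs := sum_homogeneousComponent (φ := Q)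
    exact hs.symm.trans (Finset.sum_eq_zero fun j _ => hall j)
  obtain ⟨j0, hQj, hltj0⟩ : ∃ j0 : ℕ, homogeneousComponent j0 Q ≠ 0 ∧
      ∀ j, j < j0 → homogeneousComponent j Q = 0 :=
    ⟨Nat.find hex, Nat.find_spec hex, fun j hj => by
      by_contra hcon; exact Nat.find_min hex hj hcon⟩
  have hhom : (homogeneousComponent j0 Q).IsHomogeneous j0 :=
    homogeneousComponent_isHomogeneous j0 Q
  have hj0k : j0 ≤ k := by
    by_contra hgt
    push_neg at hgt
    exact hQj (homogeneousComponent_eq_zero _ _ (lt_of_le_of_lt hQd hgt))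
  have hQsum : (∑ j ∈ Finset.range (k + 1), homogeneousComponent j Q) = Q := by
    refine Eq.trans (Finset.sum_subset ?_ ?_).symm (sum_homogeneousComponent (φ := Q))
    · exact Finset.range_subset_range.2 (by omega)
    · intro j hjt hjs
      exact homogeneousComponent_eq_zero _ _
        (by simp only [Finset.mem_range] at hjs ⊢; omega)
  have hfun : ∃ v : Fin n → ℝ, eval v (homogeneousComponent j0 Q) ≠ 0 := by
    by_contra hall
    push_neg at hall
    exact hQj (MvPolynomial.funext fun x => by rw [hall x, map_zero])
  obtain ⟨v, hv⟩ := hfun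
  have hy0e : ∃ y : Euc n, y ≠ 0 ∧ eval (fun i => y i) (homogeneousComponent j0 Q) ≠ 0 := by
    by_cases hj : j0 = 0
    · refine ⟨EuclideanSpace.single ⟨0, hn⟩ 1, ?_, ?_⟩
      · intro h0
        have hnorm := congrArg (fun z : Euc n => ‖z‖) h0
        simp [EuclideanSpace.norm_single] at hnorm
      · rw [hj] at hv ⊢
        rw [homogeneousComponent_zero, eval_C] at hv ⊢
        exact hv
    · refine ⟨(WithLp.toLp 2 v : Euc n), ?_, hv⟩
      intro h0
      apply hv
      obtain ⟨C0, hC00, hCb⟩ := homog_eval_bound _ hhom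
      have hb := hCb (WithLp.toLp 2 v : Euc n)
      rw [h0] at hb
      simp only [norm_zero, zero_pow hj, mul_zero] at hb
      have hb2 : eval (fun i => (0 : Euc n) i) (homogeneousComponent j0 Q) = 0 :=
        abs_eq_zero.1 (le_antisymm hb (abs_nonneg _))
      have hzero : v = fun i => (0 : Euc n) i := by
        funext i
        exact congrFun (congrArg (fun z : Euc n => fun i => z i) h0) i
      rw [hzero]
      exact hb2
  obtain ⟨y0, hy0ne, hy0⟩ := hy0e
  choose Cf hCf0 hCfb using fun j : ℕ =>
    homog_eval_bound (homogeneousComponent j Q) (homogeneousComponent_isHomogeneous j Q)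
  set Ct : ℝ := ∑ j ∈ Finset.range (k + 1), Cf j with hCt
  have hCt0 : 0 ≤ Ct := Finset.sum_nonneg fun j _ => hCf0 j
  have hny0 : 0 < ‖y0‖ := norm_pos_iff.2 hy0ne
  obtain ⟨c, hcpos, hcy0⟩ : ∃ c : ℝ, 0 < c ∧
      c * ‖y0‖ ^ j0 < |eval (fun i => y0 i) (homogeneousComponent j0 Q)| := by
    refine ⟨|eval (fun i => y0 i) (homogeneousComponent j0 Q)| / (2 * ‖y0‖ ^ j0),
      div_pos (abs_pos.2 hy0) (by positivity), ?_⟩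
    have ha : (0:ℝ) < ‖y0‖ ^ j0 := by positivity
    have hcalc : |eval (fun i => y0 i) (homogeneousComponent j0 Q)| / (2 * ‖y0‖ ^ j0) * ‖y0‖ ^ j0
        = |eval (fun i => y0 i) (homogeneousComponent j0 Q)| / 2 := by
      field_simp
    rw [hcalc]
    exact half_lt_self (abs_pos.2 hy0)
  set r0 : ℝ := min 1 (c / (2 * (Ct + 1))) with hr0
  have hr0pos : 0 < r0 := lt_min one_pos (by positivity)
  have hiff : ∀ t : ℝ, 0 < t → ∀ z : Euc n,
      ((t • z ≠ 0 ∧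
          c * ‖t • z‖ ^ j0 < |eval (fun i => (t • z) i) (homogeneousComponent j0 Q)|) ↔
        (z ≠ 0 ∧ c * ‖z‖ ^ j0 < |eval (fun i => z i) (homogeneousComponent j0 Q)|)) := by
    intro t ht z
    have htj : (0:ℝ) < t ^ j0 := pow_pos ht _
    rw [homog_eval_smul _ hhom t z, norm_smul, Real.norm_eq_abs, abs_of_pos ht, mul_pow,
      abs_mul, abs_pow, abs_of_pos ht]
    constructor
    · rintro ⟨h1, h2⟩
      refine ⟨fun h0 => h1 (by rw [h0, smul_zero]), ?_⟩
      have h2' : t ^ j0 * (c * ‖z‖ ^ j0) <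
          t ^ j0 * |eval (fun i => z i) (homogeneousComponent j0 Q)| := by
        nlinarith [h2]
      exact (mul_lt_mul_iff_right₀ htj).1 h2'
    · rintro ⟨h1, h2⟩
      refine ⟨smul_ne_zero ht.ne' h1, ?_⟩
      nlinarith [h2, htj]
  obtain ⟨Wset, hWs, hκ0, hmain⟩ : ∃ W : Set (Euc n),
      (∀ r : ℝ, 0 < r → r • W = W) ∧ volume (W ∩ ball (0 : Euc n) 1) ≠ 0 ∧
      ∀ y ∈ W, ‖y‖ ≤ r0 → 2 * (c / 8) * ‖y‖ ^ k < |eval (fun i => y i) Q| := by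
    refine ⟨{y : Euc n | y ≠ 0 ∧
      c * ‖y‖ ^ j0 < |eval (fun i => y i) (homogeneousComponent j0 Q)|}, ?_, ?_, ?_⟩
    · intro r hr
      ext z
      rw [Set.mem_smul_set_iff_inv_smul_mem₀ hr.ne']
      exact hiff r⁻¹ (inv_pos.2 hr) z
    · have hWopen : IsOpen {y : Euc n | y ≠ 0 ∧
          c * ‖y‖ ^ j0 < |eval (fun i => y i) (homogeneousComponent j0 Q)|} := by
        rw [Set.setOf_and]
        exact isOpen_ne.inter (isOpen_lt (continuous_const.mul (continuous_norm.pow j0))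
          (continuous_evalE _).abs)
      have hy0W : y0 ∈ {y : Euc n | y ≠ 0 ∧
          c * ‖y‖ ^ j0 < |eval (fun i => y i) (homogeneousComponent j0 Q)|} := ⟨hy0ne, hcy0⟩
      have hwmem : ((2 * ‖y0‖)⁻¹ • y0) ∈ ({y : Euc n | y ≠ 0 ∧
          c * ‖y‖ ^ j0 < |eval (fun i => y i) (homogeneousComponent j0 Q)|}
          ∩ ball (0 : Euc n) 1) := by
        constructor
        · exact (hiff _ (by positivity) y0).2 hy0W
        · rw [mem_ball_zero_iff, norm_smul, Real.norm_eq_abs, abs_of_pos (by positivity)]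
          have h12 : (2 * ‖y0‖)⁻¹ * ‖y0‖ = 1 / 2 := by
            field_simp
          rw [h12]; norm_num
      exact ((hWopen.inter isOpen_ball).measure_pos volume ⟨_, hwmem⟩).ne'
    · rintro y ⟨hyne, hyW⟩ hyr
      have hny : 0 < ‖y‖ := norm_pos_iff.2 hyne
      have hy1 : ‖y‖ ≤ 1 := hyr.trans (min_le_left _ _)
      have hyc : ‖y‖ ≤ c / (2 * (Ct + 1)) := hyr.trans (min_le_right _ _)
      have hCty : Ct * ‖y‖ ≤ c / 2 := by
        rw [le_div_iff₀ (by positivity)] at hyc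
        nlinarith [hCt0, hny.le]
      have hdec : eval (fun i => y i) Q
          = eval (fun i => y i) (homogeneousComponent j0 Q)
            + ∑ j ∈ (Finset.range (k + 1)).erase j0,
                eval (fun i => y i) (homogeneousComponent j Q) := by
        conv_lhs => rw [← hQsum]
        rw [map_sum, ← Finset.add_sum_erase _ _ (Finset.mem_range.2 (Nat.lt_succ_of_le hj0k))]
      have htail : |∑ j ∈ (Finset.range (k + 1)).erase j0,
          eval (fun i => y i) (homogeneousComponent j Q)| ≤ c / 2 * ‖y‖ ^ j0 := by
        refine (Finset.abs_sum_le_sum_abs _ _).trans ?_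
        have hterm : ∀ j ∈ (Finset.range (k + 1)).erase j0,
            |eval (fun i => y i) (homogeneousComponent j Q)| ≤ Cf j * (‖y‖ ^ j0 * ‖y‖) := by
          intro j hj
          have hjne : j ≠ j0 := Finset.ne_of_mem_erase hj
          rcases lt_or_gt_of_ne hjne with hlt | hgt
          · rw [hltj0 j hlt]
            simp only [map_zero, abs_zero]
            exact mul_nonneg (hCf0 j) (by positivity)
          · refine (hCfb j y).trans ?_
            refine mul_le_mul_of_nonneg_left ?_ (hCf0 j)
            have hsplit : ‖y‖ ^ j = ‖y‖ ^ j0 * ‖y‖ ^ (j - j0) := by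
              rw [← pow_add]; congr 1; omega
            rw [hsplit]
            refine mul_le_mul_of_nonneg_left ?_ (by positivity)
            calc ‖y‖ ^ (j - j0) ≤ ‖y‖ ^ 1 := pow_le_pow_of_le_one hny.le hy1 (by omega)
              _ = ‖y‖ := pow_one _
        refine (Finset.sum_le_sum hterm).trans ?_
        rw [← Finset.sum_mul]
        have hCsub : ∑ j ∈ (Finset.range (k + 1)).erase j0, Cf j ≤ Ct :=
          Finset.sum_le_sum_of_subset_of_nonneg (Finset.erase_subset _ _) fun j _ _ => hCf0 j
        calc (∑ j ∈ (Finset.range (k + 1)).erase j0, Cf j) * (‖y‖ ^ j0 * ‖y‖)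
            ≤ Ct * (‖y‖ ^ j0 * ‖y‖) := mul_le_mul_of_nonneg_right hCsub (by positivity)
          _ = (Ct * ‖y‖) * ‖y‖ ^ j0 := by ring
          _ ≤ (c / 2) * ‖y‖ ^ j0 := mul_le_mul_of_nonneg_right hCty (by positivity)
      have hk' : ‖y‖ ^ k ≤ ‖y‖ ^ j0 := pow_le_pow_of_le_one hny.le hy1 hj0k
      set A : ℝ := eval (fun i => y i) (homogeneousComponent j0 Q) with hA
      set B : ℝ := ∑ j ∈ (Finset.range (k + 1)).erase j0,
        eval (fun i => y i) (homogeneousComponent j Q) with hB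
      rw [hdec]
      have habs : |A| - |B| ≤ |A + B| := by
        have h := abs_add_le (A + B) (-B)
        simp only [add_neg_cancel_right, abs_neg] at h
        linarith
      have hkpos : (0:ℝ) < ‖y‖ ^ k := pow_pos hny k
      have h5 : c / 2 * ‖y‖ ^ j0 < |A| - |B| := by linarith
      have h6 : c / 2 * ‖y‖ ^ k ≤ c / 2 * ‖y‖ ^ j0 :=
        mul_le_mul_of_nonneg_left hk' (by positivity)
      have h7 : 2 * (c / 8) * ‖y‖ ^ k < c / 2 * ‖y‖ ^ k := by
        have hcc : 2 * (c / 8) < c / 2 := by linarith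
        exact mul_lt_mul_of_pos_right hcc hkpos
      linarith
  set ρ : ENNReal := volume (Wset ∩ ball (0 : Euc n) 1) / volume (ball (0 : Euc n) 1) with hρ
  have hv1top : volume (ball (0 : Euc n) 1) ≠ ⊤ := vball_ne_top _ _
  have hρ0 : 0 < ρ := ENNReal.div_pos hκ0 hv1top
  -- bad sets
  have hε : (0:ℝ) < c / 8 := by positivity
  have hSp := hp3 (c / 8) hε
  have hSq := hq3 (c / 8) hε
  have hpc : Continuous p := by
    have hpp : p = fun x => eval (fun i => x i) P := funext hPe
    rw [hpp]; exact continuous_evalE P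
  have hqc : Continuous q := by
    have hqq : q = fun x => eval (fun i => x i) P' := funext hP'e
    rw [hqq]; exact continuous_evalE P'
  have hφc : Continuous fun x : Euc n => (c / 8) * ‖x - x₀‖ ^ k :=
    continuous_const.mul (((continuous_id.sub continuous_const).norm).pow k)
  have hSpm : MeasurableSet {x : Euc n | x ∈ D ∧ (c / 8) * ‖x - x₀‖ ^ k < |f x - p x|} :=
    Sp_measurable hD hf p hpc _ hφc
  have hSqm : MeasurableSet {x : Euc n | x ∈ D ∧ (c / 8) * ‖x - x₀‖ ^ k < |f x - q x|} :=
    Sp_measurable hD hf q hqc _ hφc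
  have hDz := compl_ratio_tendsto_zero hD hdens
  have hSpz := dz_ratio_tendsto_zero hSpm hSp
  have hSqz := dz_ratio_tendsto_zero hSqm hSq
  have hsum0 : Tendsto (fun r : ℝ =>
      volume (Dᶜ ∩ ball x₀ r) / volume (ball x₀ r)
      + volume ({x : Euc n | x ∈ D ∧ (c / 8) * ‖x - x₀‖ ^ k < |f x - p x|} ∩ ball x₀ r)
          / volume (ball x₀ r)
      + volume ({x : Euc n | x ∈ D ∧ (c / 8) * ‖x - x₀‖ ^ k < |f x - q x|} ∩ ball x₀ r)
          / volume (ball x₀ r))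
      (nhdsWithin (0:ℝ) (Set.Ioi 0)) (nhds 0) := by
    have h := (hDz.add hSpz).add hSqz
    simpa using h
  have hev : ∀ᶠ r in nhdsWithin (0:ℝ) (Set.Ioi 0), ρ ≤
      volume (Dᶜ ∩ ball x₀ r) / volume (ball x₀ r)
      + volume ({x : Euc n | x ∈ D ∧ (c / 8) * ‖x - x₀‖ ^ k < |f x - p x|} ∩ ball x₀ r)
          / volume (ball x₀ r)
      + volume ({x : Euc n | x ∈ D ∧ (c / 8) * ‖x - x₀‖ ^ k < |f x - q x|} ∩ ball x₀ r)
          / volume (ball x₀ r) := by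
    filter_upwards [Ioc_mem_nhdsGT_of_mem ⟨le_refl (0:ℝ), hr0pos⟩] with r hr
    obtain ⟨hrpos, hrr0⟩ := hr
    have htr : volume ({x : Euc n | x - x₀ ∈ Wset} ∩ ball x₀ r)
        = volume (Wset ∩ ball (0 : Euc n) r) := by
      have hpre : {x : Euc n | x - x₀ ∈ Wset} ∩ ball x₀ r
          = (fun x : Euc n => x + (-x₀)) ⁻¹' (Wset ∩ ball (0 : Euc n) r) := by
        ext z
        simp only [Set.mem_inter_iff, Set.mem_setOf_eq, Set.mem_preimage, mem_ball_zero_iff,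
          mem_ball_iff_norm, sub_eq_add_neg, neg_zero, add_zero]
      rw [hpre, measure_preimage_add_right]
    have hWr : volume (Wset ∩ ball (0 : Euc n) r)
        = ENNReal.ofReal (r ^ n) * volume (Wset ∩ ball (0 : Euc n) 1) :=
      scaled_inter_measure hWs hrpos
    have hBr : volume (ball x₀ r) = ENNReal.ofReal (r ^ n) * volume (ball (0 : Euc n) 1) := by
      rw [Measure.addHaar_ball_of_pos volume x₀ hrpos, finrank_euclideanSpace_fin]
    have hrn0 : ENNReal.ofReal (r ^ n) ≠ 0 := by
      simp only [ne_eq, ENNReal.ofReal_eq_zero, not_le]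
      positivity
    have hρeq : volume ({x : Euc n | x - x₀ ∈ Wset} ∩ ball x₀ r) / volume (ball x₀ r) = ρ := by
      rw [htr, hWr, hBr, ENNReal.mul_div_mul_left _ _ hrn0 ENNReal.ofReal_ne_top]
    have hsub : {x : Euc n | x - x₀ ∈ Wset} ∩ ball x₀ r ⊆
        (Dᶜ ∩ ball x₀ r)
        ∪ ({x : Euc n | x ∈ D ∧ (c / 8) * ‖x - x₀‖ ^ k < |f x - p x|} ∩ ball x₀ r)
        ∪ ({x : Euc n | x ∈ D ∧ (c / 8) * ‖x - x₀‖ ^ k < |f x - q x|} ∩ ball x₀ r) := by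
      rintro x ⟨hxW, hxB⟩
      by_cases hxD : x ∈ D
      · by_cases hxp : (c / 8) * ‖x - x₀‖ ^ k < |f x - p x|
        · exact Or.inl (Or.inr ⟨⟨hxD, hxp⟩, hxB⟩)
        · by_cases hxq : (c / 8) * ‖x - x₀‖ ^ k < |f x - q x|
          · exact Or.inr ⟨⟨hxD, hxq⟩, hxB⟩
          · exfalso
            push_neg at hxp hxq
            have hxBn : ‖x - x₀‖ < r := by rwa [mem_ball_iff_norm] at hxB
            have hlt := hmain (x - x₀) hxW (le_trans hxBn.le hrr0)
            rw [hQx x] at hlt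
            have htri : |p x - q x| ≤ |f x - p x| + |f x - q x| := by
              have h1 : p x - q x = (f x - q x) - (f x - p x) := by ring
              rw [h1]
              exact (abs_sub _ _).trans (by rw [add_comm])
            nlinarith [hlt, hxp, hxq, htri]
      · exact Or.inl (Or.inl ⟨hxD, hxB⟩)
    calc ρ = volume ({x : Euc n | x - x₀ ∈ Wset} ∩ ball x₀ r) / volume (ball x₀ r) := hρeq.symm
      _ ≤ (volume (Dᶜ ∩ ball x₀ r)
            + volume ({x : Euc n | x ∈ D ∧ (c / 8) * ‖x - x₀‖ ^ k < |f x - p x|} ∩ ball x₀ r)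
            + volume ({x : Euc n | x ∈ D ∧ (c / 8) * ‖x - x₀‖ ^ k < |f x - q x|} ∩ ball x₀ r))
            / volume (ball x₀ r) := by
          refine ENNReal.div_le_div_right ?_ _
          refine (measure_mono hsub).trans ?_
          refine (measure_union_le _ _).trans ?_
          exact add_le_add (measure_union_le _ _) le_rfl
      _ = _ := by rw [ENNReal.add_div, ENNReal.add_div]
  have hfin : ρ ≤ 0 := ge_of_tendsto hsum0 hev
  exact absurd hfin hρ0.not_ge

end MainUniq

/-- **Proposition 3.3(2)** (abelian case): uniqueness of approximate derivatives
of order `k`. -/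
theorem stmt8 (n : ℕ) (hn : 0 < n) (D : Set (Euc n)) (hD : MeasurableSet D)
    (f : Euc n → ℝ) (hf : Measurable (D.restrict f)) (k : ℕ)
    (x₀ : Euc n) (hx₀ : x₀ ∈ D) (hdens : DensityOneAt D x₀)
    (p q : Euc n → ℝ)
    (hp : ApproxDiffAt k D f x₀ p) (hq : ApproxDiffAt k D f x₀ q) :
    p = q := by
  exact stmt8' n hn D hD f hf k x₀ hx₀ hdens p q hp hq
end
end

section
/- (Measurability of approximate derivatives.) Let D ⊆ ℝ^n be measurable, k a nonnegative integer, and f : D → ℝ a measurable function which is approximately differentiable of order k at almost every point of D. Then there exist measurable functions a_J : D → ℝ, one for each multi-index J with |J| ≤ k, such that for almost every x₀ ∈ D, f is approximately differentiable of order k at x₀ with polynomial x ↦ Σ_{|J| ≤ k} a_J(x₀) (x − x₀)^J. (This is the paper's Proposition 4.3 specialized to the abelian Carnot group ℝ^n.) -/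
open MeasureTheory Metric Filter

noncomputable section

open Set
open scoped ENNReal

namespace P43
variable {n : ℕ}

def rat (S : Set (Euc n)) (x : Euc n) (r : ℝ) : ℝ≥0∞ :=
  volume (S ∩ ball x r) / volume (ball x r)

def DZ (S : Set (Euc n)) (x : Euc n) : Prop :=
  Tendsto (rat S x) (nhdsWithin 0 (Set.Ioi 0)) (nhds 0)

lemma vol_ball_pos (x : Euc n) {r : ℝ} (hr : 0 < r) : volume (ball x r) ≠ 0 :=
  (measure_ball_pos _ _ hr).ne'

lemma vol_ball_ne_top (x : Euc n) (r : ℝ) : volume (ball x r) ≠ ⊤ :=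
  measure_ball_lt_top.ne

lemma rat_le_one {S : Set (Euc n)} {x : Euc n} {r : ℝ} : rat S x r ≤ 1 := by
  rw [rat]
  exact ENNReal.div_le_of_le_mul (by simpa using measure_mono inter_subset_right)

lemma rat_add_compl {S : Set (Euc n)} (hS : MeasurableSet S) {x : Euc n} {r : ℝ} (hr : 0 < r) :
    rat S x r + rat Sᶜ x r = 1 := by
  rw [rat, rat, ENNReal.div_add_div_same]
  rw [show S ∩ ball x r = ball x r ∩ S from inter_comm _ _,
    show Sᶜ ∩ ball x r = ball x r \ S from (diff_eq _ _).symm ▸ inter_comm _ _]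
  rw [measure_inter_add_diff _ hS]
  exact ENNReal.div_self (vol_ball_pos x hr) (vol_ball_ne_top x r)

lemma rat_mono {S T : Set (Euc n)} (h : S ⊆ T) (x : Euc n) (r : ℝ) : rat S x r ≤ rat T x r :=
  ENNReal.div_le_div_right (measure_mono (inter_subset_inter_left _ h)) _

lemma dz_mono {S T : Set (Euc n)} {x : Euc n} (h : S ⊆ T) (hT : DZ T x) : DZ S x :=
  tendsto_of_tendsto_of_tendsto_of_le_of_le tendsto_const_nhds hT
    (fun _ => zero_le) (fun r => rat_mono h x r)

lemma dz_union {S T : Set (Euc n)} {x : Euc n} (hS : DZ S x) (hT : DZ T x) : DZ (S ∪ T) x := by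
  have : Tendsto (fun r => rat S x r + rat T x r) (nhdsWithin 0 (Set.Ioi 0)) (nhds 0) := by
    simpa using hS.add hT
  refine tendsto_of_tendsto_of_tendsto_of_le_of_le tendsto_const_nhds this
    (fun _ => zero_le) (fun r => ?_)
  rw [rat, union_inter_distrib_right]
  exact le_trans (ENNReal.div_le_div_right (measure_union_le _ _) _)
    (le_of_eq (ENNReal.div_add_div_same).symm)

lemma densityOneAt_eq (S : Set (Euc n)) (x : Euc n) :
    DensityOneAt S x ↔ Tendsto (rat S x) (nhdsWithin 0 (Set.Ioi 0)) (nhds 1) := Iff.rfl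

lemma densityOne_iff_dz_compl {S : Set (Euc n)} (hS : MeasurableSet S) {x : Euc n} :
    DensityOneAt S x ↔ DZ Sᶜ x := by
  rw [densityOneAt_eq]
  have hev1 : ∀ᶠ r in nhdsWithin (0:ℝ) (Set.Ioi 0), rat Sᶜ x r = 1 - rat S x r := by
    filter_upwards [self_mem_nhdsWithin] with r hr
    exact ENNReal.eq_sub_of_add_eq (lt_of_le_of_lt rat_le_one ENNReal.one_lt_top).ne
      (by rw [add_comm]; exact rat_add_compl hS hr)
  have hev2 : ∀ᶠ r in nhdsWithin (0:ℝ) (Set.Ioi 0), rat S x r = 1 - rat Sᶜ x r := by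
    filter_upwards [self_mem_nhdsWithin] with r hr
    exact ENNReal.eq_sub_of_add_eq (lt_of_le_of_lt rat_le_one ENNReal.one_lt_top).ne
      (rat_add_compl hS hr)
  constructor
  · intro h
    refine Tendsto.congr' (hev1.mono fun r h => h.symm) ?_
    have := ((ENNReal.continuous_sub_left (a := 1) ENNReal.one_ne_top).tendsto 1).comp h
    simpa [Function.comp_def] using this
  · intro h
    refine Tendsto.congr' (hev2.mono fun r h => h.symm) ?_
    have := ((ENNReal.continuous_sub_left (a := 1) ENNReal.one_ne_top).tendsto 0).comp h
    simpa [Function.comp_def] using this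

lemma dz_iff_densityZero {S : Set (Euc n)} (hS : MeasurableSet S) {x : Euc n} :
    DensityZeroAt S x ↔ DZ S x := by
  rw [DensityZeroAt, densityOne_iff_dz_compl hS.compl, compl_compl]

lemma densityOne_inter {A B : Set (Euc n)} (hA : MeasurableSet A) (hB : MeasurableSet B)
    {x : Euc n} (h1 : DensityOneAt A x) (h2 : DensityOneAt B x) : DensityOneAt (A ∩ B) x := by
  rw [densityOne_iff_dz_compl (hA.inter hB), compl_inter]
  exact dz_union ((densityOne_iff_dz_compl hA).1 h1) ((densityOne_iff_dz_compl hB).1 h2)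

lemma nontrivial_euc (hn : 0 < n) : Nontrivial (Euc n) := by
  have : Nonempty (Fin n) := ⟨⟨0, hn⟩⟩
  infer_instance

lemma vol_ball_eq (hn : 0 < n) (x : Euc n) {r : ℝ} (hr : 0 ≤ r) :
    volume (ball x r) = ENNReal.ofReal (r ^ n) * volume (ball (0 : Euc n) 1) := by
  haveI := nontrivial_euc hn
  simpa [finrank_euclideanSpace_fin] using
    MeasureTheory.Measure.addHaar_ball (volume : Measure (Euc n)) x hr

lemma vol_closedBall_eq (hn : 0 < n) (x : Euc n) {r : ℝ} (hr : 0 ≤ r) :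
    volume (closedBall x r) = ENNReal.ofReal (r ^ n) * volume (ball (0 : Euc n) 1) := by
  haveI := nontrivial_euc hn
  simpa [finrank_euclideanSpace_fin] using
    MeasureTheory.Measure.addHaar_closedBall (volume : Measure (Euc n)) x hr

lemma tendsto_halfpow : Tendsto (fun m : ℕ => ((1:ℝ)/2) ^ m) atTop (nhdsWithin 0 (Set.Ioi 0)) := by
  rw [tendsto_nhdsWithin_iff]
  exact ⟨tendsto_pow_atTop_nhds_zero_of_lt_one (by norm_num) (by norm_num),
    Eventually.of_forall fun m => pow_pos (by norm_num : (0:ℝ) < 1/2) m⟩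

lemma dz_iff_seq (hn : 0 < n) {S : Set (Euc n)} {x : Euc n} :
    DZ S x ↔ Tendsto (fun m : ℕ => rat S x (((1:ℝ)/2) ^ m)) atTop (nhds 0) := by
  constructor
  · intro h; exact h.comp tendsto_halfpow
  · intro h
    rw [DZ, ENNReal.tendsto_nhds_zero]
    rw [ENNReal.tendsto_nhds_zero] at h
    intro ε hε
    set k : ℝ≥0∞ := ENNReal.ofReal (2 ^ n) with hk
    have hk0 : k ≠ 0 := by
      simp [hk, ENNReal.ofReal_eq_zero, not_le]
    have hktop : k ≠ ⊤ := ENNReal.ofReal_ne_top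
    have hεk : 0 < ε / k := ENNReal.div_pos hε.ne' hktop
    obtain ⟨M, hM⟩ := (h (ε / k) hεk).exists_forall_of_atTop
    have hmem : Set.Ioo (0:ℝ) (((1:ℝ)/2) ^ M) ∈ nhdsWithin (0:ℝ) (Set.Ioi 0) :=
      Ioo_mem_nhdsGT_of_mem ⟨le_refl _, pow_pos (by norm_num) M⟩
    filter_upwards [hmem] with r hr
    obtain ⟨hr0, hrM⟩ := hr
    have hex : ∃ j : ℕ, ((1:ℝ)/2) ^ j < r := exists_pow_lt_of_lt_one hr0 (by norm_num)
    set j₀ := Nat.find hex with hj₀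
    have hj₀pos : 0 < j₀ := by
      rcases Nat.eq_zero_or_pos j₀ with h0 | h
      · exfalso
        have := Nat.find_spec hex
        rw [← hj₀, h0] at this
        simp at this
        have : r < 1 := lt_of_lt_of_le hrM (pow_le_one₀ (by norm_num) (by norm_num))
        linarith
      · exact h
    set m := j₀ - 1 with hm
    have hmsucc : m + 1 = j₀ := Nat.succ_pred_eq_of_pos hj₀pos
    have h1 : r ≤ ((1:ℝ)/2) ^ m := by
      have := Nat.find_min hex (m := m) (by omega)
      push_neg at this
      exact this
    have h2 : ((1:ℝ)/2) ^ (m+1) < r := by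
      have := Nat.find_spec hex
      rwa [← hj₀, ← hmsucc] at this
    have hMm : M ≤ m := by
      have : ((1:ℝ)/2) ^ (m+1) < ((1:ℝ)/2) ^ M := lt_trans h2 hrM
      have := (pow_lt_pow_iff_right_of_lt_one₀ (by norm_num : (0:ℝ) < 1/2) (by norm_num)).1 this
      omega
    set N := volume (S ∩ ball x (((1:ℝ)/2) ^ m)) with hN
    set Bm := volume (ball x (((1:ℝ)/2) ^ m)) with hBm
    set β := volume (ball x (((1:ℝ)/2) ^ (m+1))) with hβ
    have hball : ball x r ⊆ ball x (((1:ℝ)/2) ^ m) := ball_subset_ball h1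
    have hnum : volume (S ∩ ball x r) ≤ N := measure_mono (inter_subset_inter_right _ hball)
    have hden : β ≤ volume (ball x r) := measure_mono (ball_subset_ball h2.le)
    have hBmeq : Bm = k * β := by
      rw [hBm, hβ, vol_ball_eq hn x (by positivity), vol_ball_eq hn x (by positivity)]
      rw [← mul_assoc, ← ENNReal.ofReal_mul (by positivity)]
      congr 2
      rw [← mul_pow]
      ring_nf
    have hseq : N / Bm ≤ ε / k := hM m hMm
    have hβ0 : β ≠ 0 := vol_ball_pos x (pow_pos (by norm_num) _)
    have hβtop : β ≠ ⊤ := vol_ball_ne_top x _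
    have hNβ : N / β ≤ ε := by
      rw [ENNReal.div_le_iff hβ0 hβtop]
      have : N ≤ (ε / k) * Bm := by
        rw [← ENNReal.div_le_iff (by rw [hBmeq]; exact mul_ne_zero hk0 hβ0) (by rw [hBmeq]; exact ENNReal.mul_ne_top hktop hβtop)]
        exact hseq
      refine this.trans ?_
      rw [hBmeq, ← mul_assoc, ENNReal.div_mul_cancel hk0 hktop]
    calc rat S x r ≤ N / volume (ball x r) := ENNReal.div_le_div_right hnum _
      _ ≤ N / β := ENNReal.div_le_div_left hden _
      _ ≤ ε := hNβ

open MvPolynomial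

def toF : (Fin n → ℕ) → (Fin n →₀ ℕ) := Finsupp.equivFunOnFinite.symm

@[simp] lemma toF_apply (J : Fin n → ℕ) (i : Fin n) : toF J i = J i := rfl

lemma toF_inj : Function.Injective (toF (n := n)) := Finsupp.equivFunOnFinite.symm.injective

lemma mem_multiIdxLe {k : ℕ} {J : Fin n → ℕ} (h : mdeg J ≤ k) : J ∈ multiIdxLe n k := by
  rw [multiIdxLe, Finset.mem_filter]
  refine ⟨?_, h⟩
  rw [Fintype.mem_piFinset]
  intro i
  rw [Finset.mem_range]
  have : J i ≤ mdeg J := Finset.single_le_sum (fun j _ => Nat.zero_le _) (Finset.mem_univ i)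
  omega

lemma mdeg_le_of_mem {k : ℕ} {J : Fin n → ℕ} (h : J ∈ multiIdxLe n k) : mdeg J ≤ k :=
  (Finset.mem_filter.1 h).2

lemma finsupp_deg_eq (d : Fin n →₀ ℕ) : (d.sum fun _ e => e) = mdeg (fun i => d i) := by
  rw [mdeg, Finsupp.sum_fintype]
  intro i; rfl

lemma eval_eq_sum_multiIdxLe {k : ℕ} {Q : MvPolynomial (Fin n) ℝ} (h : Q.totalDegree ≤ k)
    (y : Euc n) :
    MvPolynomial.eval (fun i => y i) Q
      = ∑ J ∈ multiIdxLe n k, MvPolynomial.coeff (toF J) Q * mpow y J := by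
  rw [eval_eq']
  have hsub : Q.support ⊆ (multiIdxLe n k).image toF := by
    intro d hd
    rw [Finset.mem_image]
    refine ⟨fun i => d i, mem_multiIdxLe ?_, ?_⟩
    · rw [← finsupp_deg_eq]; exact le_trans (le_totalDegree hd) h
    · ext i; rfl
  rw [Finset.sum_subset hsub]
  · rw [Finset.sum_image (fun a _ b _ hab => toF_inj hab)]
    refine Finset.sum_congr rfl fun J _ => ?_
    rw [mpow]
    simp
  · intro d _ hd
    rw [MvPolynomial.notMem_support_iff.1 hd, zero_mul]

lemma coeff_eq_zero_of_fun_zero {s : Finset (Fin n → ℕ)} {d : (Fin n → ℕ) → ℝ}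
    (h : ∀ y : Euc n, ∑ J ∈ s, d J * mpow y J = 0) : ∀ J ∈ s, d J = 0 := by
  intro J hJ
  set P : MvPolynomial (Fin n) ℝ := ∑ J ∈ s, MvPolynomial.monomial (toF J) (d J) with hP
  have hPz : P = 0 := by
    apply MvPolynomial.funext
    intro x
    rw [map_sum]
    simp only [MvPolynomial.eval_monomial, map_zero]
    have := h ((WithLp.equiv 2 (Fin n → ℝ)).symm x)
    rw [show (0:ℝ) = eval x 0 by simp, map_zero]
    rw [← this]
    refine Finset.sum_congr rfl fun I _ => ?_
    rw [mpow, Finsupp.prod_fintype]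
    · rfl
    · intro i; rfl
  have := congrArg (MvPolynomial.coeff (toF J)) hPz
  rw [hP, MvPolynomial.coeff_sum] at this
  simp only [MvPolynomial.coeff_monomial, MvPolynomial.coeff_zero] at this
  rwa [Finset.sum_eq_single J (fun I _ hIJ => if_neg (fun hc => hIJ (toF_inj hc)))
    (fun hc => absurd hJ hc), if_pos rfl] at this

lemma isPolyFun_polyform (k : ℕ) (c : (Fin n → ℕ) → ℝ) (x₀ : Euc n) :
    IsPolyFun n k (fun x => ∑ J ∈ multiIdxLe n k, c J * mpow (x - x₀) J) := by
  refine ⟨∑ J ∈ multiIdxLe n k, MvPolynomial.C (c J) * ∏ i, (MvPolynomial.X i - MvPolynomial.C (x₀ i)) ^ (J i), ?_, ?_⟩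
  · refine totalDegree_finsetSum_le fun J hJ => ?_
    refine le_trans (totalDegree_mul _ _) ?_
    rw [totalDegree_C, zero_add]
    refine le_trans (totalDegree_finset_prod _ _) (le_trans ?_ (mdeg_le_of_mem hJ))
    rw [mdeg]
    refine Finset.sum_le_sum fun i _ => ?_
    refine le_trans (totalDegree_pow _ _) ?_
    have : (MvPolynomial.X i - MvPolynomial.C (x₀ i) : MvPolynomial (Fin n) ℝ).totalDegree ≤ 1 := by
      rw [sub_eq_add_neg, ← map_neg]
      exact le_trans (totalDegree_add _ _) (by simp [totalDegree_X, totalDegree_C])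
    calc J i * (MvPolynomial.X i - MvPolynomial.C (x₀ i) : MvPolynomial (Fin n) ℝ).totalDegree
        ≤ J i * 1 := Nat.mul_le_mul_left _ this
      _ = J i := mul_one _
  · intro x
    rw [map_sum]
    refine Finset.sum_congr rfl fun J _ => ?_
    rw [map_mul, eval_C, map_prod, mpow]
    congr 1
    refine Finset.prod_congr rfl fun i _ => ?_
    rw [map_pow, map_sub, eval_X, eval_C]
    rfl

lemma totalDegree_shift_le (P : MvPolynomial (Fin n) ℝ) (a : Fin n → ℝ) :
    (MvPolynomial.aeval (fun i => MvPolynomial.X i + MvPolynomial.C (a i)) P).totalDegree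
      ≤ P.totalDegree := by
  rw [MvPolynomial.aeval_def, MvPolynomial.eval₂_eq']
  refine totalDegree_finsetSum_le fun d hd => ?_
  refine le_trans (totalDegree_mul _ _) ?_
  rw [MvPolynomial.algebraMap_eq, totalDegree_C, zero_add]
  refine le_trans (totalDegree_finset_prod _ _) (le_trans ?_ (le_totalDegree hd))
  rw [finsupp_deg_eq, mdeg]
  refine Finset.sum_le_sum fun i _ => ?_
  refine le_trans (totalDegree_pow _ _) ?_
  have : (MvPolynomial.X i + MvPolynomial.C (a i) : MvPolynomial (Fin n) ℝ).totalDegree ≤ 1 :=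
    le_trans (totalDegree_add _ _) (by simp [totalDegree_X, totalDegree_C])
  calc d i * (MvPolynomial.X i + MvPolynomial.C (a i) : MvPolynomial (Fin n) ℝ).totalDegree
      ≤ d i * 1 := Nat.mul_le_mul_left _ this
    _ = d i := mul_one _

lemma exists_expansion {k : ℕ} {p : Euc n → ℝ} (hp : IsPolyFun n k p) (x₀ : Euc n) :
    ∃ c : (Fin n → ℕ) → ℝ, ∀ x : Euc n,
      p x = ∑ J ∈ multiIdxLe n k, c J * mpow (x - x₀) J := by
  obtain ⟨P, hdeg, heval⟩ := hp
  set P' := MvPolynomial.aeval (fun i => MvPolynomial.X i + MvPolynomial.C (x₀ i)) P with hP'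
  have hdeg' : P'.totalDegree ≤ k := le_trans (totalDegree_shift_le P _) hdeg
  refine ⟨fun J => MvPolynomial.coeff (toF J) P', fun x => ?_⟩
  rw [← eval_eq_sum_multiIdxLe hdeg' (x - x₀), heval]
  have key : ∀ v : Fin n → ℝ, MvPolynomial.eval v P' = MvPolynomial.eval (fun i => v i + x₀ i) P := by
    intro v
    rw [hP']
    have h2 := MvPolynomial.comp_aeval_apply (φ := MvPolynomial.aeval (R := ℝ) v)
      (f := fun i : Fin n => MvPolynomial.X i + MvPolynomial.C (x₀ i)) P
    have hsimp : (fun i : Fin n => MvPolynomial.aeval (R := ℝ) v (MvPolynomial.X i + MvPolynomial.C (x₀ i))) = fun i => v i + x₀ i := by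
      funext i; simp
    rw [hsimp] at h2
    calc MvPolynomial.eval v (MvPolynomial.aeval (fun i => MvPolynomial.X i + MvPolynomial.C (x₀ i)) P)
        = MvPolynomial.aeval (R := ℝ) v (MvPolynomial.aeval (fun i => MvPolynomial.X i + MvPolynomial.C (x₀ i)) P) := by
          rw [← MvPolynomial.coe_aeval_eq_eval]; rfl
      _ = MvPolynomial.aeval (R := ℝ) (fun i => v i + x₀ i) P := h2
      _ = MvPolynomial.eval (fun i => v i + x₀ i) P := by rw [← MvPolynomial.coe_aeval_eq_eval]; rfl
  rw [key (fun i => (x - x₀) i)]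
  have : (fun i => (x - x₀) i + x₀ i) = fun i : Fin n => x i := by
    funext i
    rw [PiLp.sub_apply]
    ring
  rw [this]

lemma mpow_smul (t : ℝ) (y : Euc n) (J : Fin n → ℕ) :
    mpow (t • y) J = t ^ mdeg J * mpow y J := by
  rw [mpow, mpow, mdeg, ← Finset.prod_pow_eq_pow_sum, ← Finset.prod_mul_distrib]
  refine Finset.prod_congr rfl fun i _ => ?_
  rw [show (t • y) i = t * y i from rfl, mul_pow]

lemma abs_coord_le_norm (y : Euc n) (i : Fin n) : |y i| ≤ ‖y‖ := by
  rw [EuclideanSpace.norm_eq]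
  have : |y i| = Real.sqrt (‖y i‖ ^ 2) := by
    rw [Real.sqrt_sq_eq_abs, Real.norm_eq_abs, abs_abs]
  rw [this]
  apply Real.sqrt_le_sqrt
  exact Finset.single_le_sum (f := fun j => ‖y j‖ ^ 2) (fun j _ => sq_nonneg _) (Finset.mem_univ i)

lemma abs_mpow_le_one {y : Euc n} (hy : ‖y‖ ≤ 1) (J : Fin n → ℕ) : |mpow y J| ≤ 1 := by
  rw [mpow, Finset.abs_prod]
  refine Finset.prod_le_one (fun i _ => abs_nonneg _) fun i _ => ?_
  rw [abs_pow]
  exact pow_le_one₀ (abs_nonneg _) (le_trans (abs_coord_le_norm y i) hy)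

lemma continuous_mpow_sum (s : Finset (Fin n → ℕ)) (d : (Fin n → ℕ) → ℝ) :
    Continuous (fun y : Euc n => ∑ J ∈ s, d J * mpow y J) := by
  refine continuous_finset_sum _ fun J _ => Continuous.mul continuous_const ?_
  refine continuous_finset_prod _ fun i _ => Continuous.pow ?_ _
  exact (EuclideanSpace.proj (𝕜 := ℝ) i).continuous

set_option maxHeartbeats 1000000 in
lemma coeff_unique (hn : 0 < n) {k : ℕ} {D : Set (Euc n)} (hD : MeasurableSet D)
    {F : Euc n → ℝ} (hF : Measurable F) {x₀ : Euc n} {c₁ c₂ : (Fin n → ℕ) → ℝ}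
    (h₁ : ApproxDiffAt k D F x₀ (fun x => ∑ J ∈ multiIdxLe n k, c₁ J * mpow (x - x₀) J))
    (h₂ : ApproxDiffAt k D F x₀ (fun x => ∑ J ∈ multiIdxLe n k, c₂ J * mpow (x - x₀) J)) :
    ∀ J ∈ multiIdxLe n k, c₁ J = c₂ J := by
  classical
  by_contra hcon
  push_neg at hcon
  obtain ⟨Jw, hJwmem, hJw⟩ := hcon
  set d : (Fin n → ℕ) → ℝ := fun J => c₁ J - c₂ J with hd
  have hex : ∃ j, ∃ J ∈ multiIdxLe n k, mdeg J = j ∧ d J ≠ 0 :=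
    ⟨mdeg Jw, Jw, hJwmem, rfl, sub_ne_zero.2 hJw⟩
  obtain ⟨j₀, ⟨J₀, hJ₀mem, hJ₀deg, hJ₀ne⟩, hmin'⟩ :
      ∃ j, (∃ J ∈ multiIdxLe n k, mdeg J = j ∧ d J ≠ 0) ∧
        ∀ m, m < j → ¬ ∃ J ∈ multiIdxLe n k, mdeg J = m ∧ d J ≠ 0 :=
    ⟨Nat.find hex, Nat.find_spec hex, fun m hm => Nat.find_min hex hm⟩
  have hmin : ∀ m, m < j₀ → ∀ J ∈ multiIdxLe n k, mdeg J = m → d J = 0 := by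
    intro m hm J hJmem hJdeg
    by_contra hne
    exact hmin' m hm ⟨J, hJmem, hJdeg, hne⟩
  have hj₀k : j₀ ≤ k := by
    rw [← hJ₀deg]
    exact mdeg_le_of_mem hJ₀mem
  set s₀ : Finset (Fin n → ℕ) := (multiIdxLe n k).filter (fun J => mdeg J = j₀) with hs₀
  set Qh : Euc n → ℝ := fun y => ∑ J ∈ s₀, d J * mpow y J with hQh
  set Q : Euc n → ℝ := fun y => ∑ J ∈ multiIdxLe n k, d J * mpow y J with hQ
  -- Qh is not identically zero
  have hQh_ne : ∃ y, Qh y ≠ 0 := by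
    by_contra hz
    push_neg at hz
    exact hJ₀ne (coeff_eq_zero_of_fun_zero hz J₀ (Finset.mem_filter.2 ⟨hJ₀mem, hJ₀deg⟩))
  -- homogeneity
  have hhom : ∀ (t : ℝ) (y : Euc n), Qh (t • y) = t ^ j₀ * Qh y := by
    intro t y
    rw [hQh]
    simp only
    rw [Finset.mul_sum]
    refine Finset.sum_congr rfl fun J hJ => ?_
    rw [mpow_smul, (Finset.mem_filter.1 hJ).2]
    ring
  -- a point of norm 1/2 where Qh is nonzero
  obtain ⟨ystar, hysnorm, hysne⟩ : ∃ y : Euc n, ‖y‖ = 1/2 ∧ Qh y ≠ 0 := by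
    obtain ⟨y₁, hy₁⟩ := hQh_ne
    by_cases hy10 : y₁ = 0
    · -- then j₀ = 0 and Qh is constant
      have hj00 : j₀ = 0 := by
        by_contra hj0ne
        apply hy₁
        rw [hy10, hQh]
        refine Finset.sum_eq_zero fun J hJ => ?_
        have hdeg : mdeg J = j₀ := (Finset.mem_filter.1 hJ).2
        have : ∃ i, J i ≠ 0 := by
          by_contra hJi
          push_neg at hJi
          apply hj0ne
          rw [← hdeg, mdeg]
          simp [hJi]
        obtain ⟨i, hi⟩ := this
        rw [mpow]
        rw [Finset.prod_eq_zero (Finset.mem_univ i) (by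
          rw [show ((0 : Euc n) i) = (0:ℝ) from rfl]
          exact zero_pow hi)]
        ring
      have hconst : ∀ y : Euc n, Qh y = Qh y₁ := by
        intro y
        rw [hQh]
        simp only
        refine Finset.sum_congr rfl fun J hJ => ?_
        have hdeg : mdeg J = j₀ := (Finset.mem_filter.1 hJ).2
        have hJ0 : ∀ i, J i = 0 := by
          intro i
          have := hdeg.trans hj00
          rw [mdeg] at this
          exact Finset.sum_eq_zero_iff.1 this i (Finset.mem_univ i)
        have h1 : ∀ z : Euc n, mpow z J = 1 := by
          intro z
          rw [mpow]
          refine Finset.prod_eq_one fun i _ => by rw [hJ0 i, pow_zero]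
        rw [h1, h1]
      refine ⟨(2⁻¹ : ℝ) • EuclideanSpace.single (⟨0, hn⟩ : Fin n) (1:ℝ), ?_, ?_⟩
      · rw [norm_smul, EuclideanSpace.norm_single]
        norm_num
      · rw [hconst]; exact hy₁
    · have hy₁pos : (0:ℝ) < ‖y₁‖ := norm_pos_iff.2 hy10
      refine ⟨(2 * ‖y₁‖)⁻¹ • y₁, ?_, ?_⟩
      · rw [norm_smul, Real.norm_eq_abs, abs_of_pos (by positivity)]
        field_simp
      · rw [hhom]
        refine mul_ne_zero (pow_ne_zero _ (inv_ne_zero (by positivity))) hy₁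
  set δ : ℝ := |Qh ystar| with hδdef
  have hδ : 0 < δ := abs_pos.2 hysne
  -- continuity gives a radius ρ
  have hcont : Continuous Qh := continuous_mpow_sum _ _
  obtain ⟨ρ', hρ'pos, hρ'⟩ := Metric.continuousAt_iff.1 (hcont.continuousAt (x := ystar)) (δ/2) (by positivity)
  set ρ : ℝ := min (ρ'/2) (1/8) with hρdef
  have hρpos : 0 < ρ := lt_min (by positivity) (by norm_num)
  have hρ18 : ρ ≤ 1/8 := min_le_right _ _
  have hlow : ∀ y ∈ closedBall ystar ρ, δ/2 ≤ |Qh y| ∧ 1/4 ≤ ‖y‖ ∧ ‖y‖ ≤ 3/4 := by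
    intro y hy
    rw [mem_closedBall] at hy
    have hd1 : dist y ystar < ρ' := lt_of_le_of_lt hy (lt_of_le_of_lt (min_le_left _ _) (by linarith))
    have h2 := hρ' hd1
    rw [Real.dist_eq] at h2
    have hnorm : |‖y‖ - ‖ystar‖| ≤ dist y ystar := abs_norm_sub_norm_le _ _
    rw [dist_eq_norm] at hy
    constructor
    · have : |Qh ystar| - |Qh y| ≤ |Qh y - Qh ystar| := by
        rw [abs_sub_comm]
        exact abs_sub_abs_le_abs_sub _ _
      linarith [le_of_lt h2]
    · rw [dist_eq_norm] at hnorm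
      rw [hysnorm] at hnorm
      have := abs_le.1 hnorm
      constructor <;> [linarith [this.1]; linarith [this.2]]
  set C : ℝ := (∑ J ∈ multiIdxLe n k, |d J|) + 1 with hC
  have hCpos : 0 < C := by
    have : (0:ℝ) ≤ ∑ J ∈ multiIdxLe n k, |d J| := Finset.sum_nonneg fun J _ => abs_nonneg _
    linarith
  -- remainder estimate
  have hrem : ∀ y : Euc n, ‖y‖ ≤ 1 → ∀ t : ℝ, 0 < t → t ≤ 1 →
      |Q (t • y) - t ^ j₀ * Qh y| ≤ C * t ^ (j₀ + 1) := by
    intro y hy t ht ht1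
    have hexp : Q (t • y) = ∑ J ∈ multiIdxLe n k, d J * (t ^ mdeg J * mpow y J) := by
      rw [hQ]
      exact Finset.sum_congr rfl fun J _ => by rw [mpow_smul]
    have hsplit := Finset.sum_filter_add_sum_filter_not (multiIdxLe n k)
      (fun J => mdeg J = j₀) (fun J => d J * (t ^ mdeg J * mpow y J))
    have hs₀sum : ∑ J ∈ s₀, d J * (t ^ mdeg J * mpow y J) = t ^ j₀ * Qh y := by
      rw [hQh]
      simp only
      rw [Finset.mul_sum]
      refine Finset.sum_congr rfl fun J hJ => ?_
      rw [(Finset.mem_filter.1 hJ).2]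
      ring
    have : Q (t • y) - t ^ j₀ * Qh y
        = ∑ J ∈ (multiIdxLe n k).filter (fun J => ¬ mdeg J = j₀), d J * (t ^ mdeg J * mpow y J) := by
      rw [hexp, ← hsplit, ← hs₀sum, hs₀]
      ring
    rw [this]
    refine le_trans (Finset.abs_sum_le_sum_abs _ _) ?_
    have hterm : ∀ J ∈ (multiIdxLe n k).filter (fun J => ¬ mdeg J = j₀),
        |d J * (t ^ mdeg J * mpow y J)| ≤ |d J| * t ^ (j₀ + 1) := by
      intro J hJ
      obtain ⟨hJmem, hJne⟩ := Finset.mem_filter.1 hJ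
      by_cases hdJ : d J = 0
      · rw [hdJ]
        simp
      · have hge : j₀ + 1 ≤ mdeg J := by
          rcases lt_or_ge (mdeg J) j₀ with hlt | hge'
          · exact absurd (hmin _ hlt J hJmem rfl) hdJ
          · omega
        rw [abs_mul, abs_mul, abs_pow, abs_of_pos ht]
        have h1 : t ^ mdeg J ≤ t ^ (j₀+1) := pow_le_pow_of_le_one ht.le ht1 hge
        have h2 : |mpow y J| ≤ 1 := abs_mpow_le_one hy J
        calc |d J| * (t ^ mdeg J * |mpow y J|) ≤ |d J| * (t ^ (j₀+1) * 1) := by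
              apply mul_le_mul_of_nonneg_left _ (abs_nonneg _)
              exact mul_le_mul h1 h2 (abs_nonneg _) (by positivity)
          _ = |d J| * t ^ (j₀+1) := by ring
    refine le_trans (Finset.sum_le_sum hterm) ?_
    rw [← Finset.sum_mul]
    apply mul_le_mul_of_nonneg_right _ (by positivity)
    refine le_trans (Finset.sum_le_sum_of_subset_of_nonneg (Finset.filter_subset _ _)
      (fun J _ _ => abs_nonneg _)) ?_
    rw [hC]
    linarith
  -- the contradiction
  set ε : ℝ := δ/16 with hε
  have hεpos : 0 < ε := by positivity
  have hb1 := h₁.2.2 ε hεpos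
  have hb2 := h₂.2.2 ε hεpos
  set p₁ : Euc n → ℝ := fun x => ∑ J ∈ multiIdxLe n k, c₁ J * mpow (x - x₀) J with hp₁
  set p₂ : Euc n → ℝ := fun x => ∑ J ∈ multiIdxLe n k, c₂ J * mpow (x - x₀) J with hp₂
  have hdiffQ : ∀ x : Euc n, p₁ x - p₂ x = Q (x - x₀) := by
    intro x
    rw [hp₁, hp₂, hQ]
    simp only
    rw [← Finset.sum_sub_distrib]
    exact Finset.sum_congr rfl fun J _ => by rw [hd]; ring
  set Bad₁ : Set (Euc n) := {x | x ∈ D ∧ ε * ‖x - x₀‖ ^ k < |F x - p₁ x|} with hBad₁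
  set Bad₂ : Set (Euc n) := {x | x ∈ D ∧ ε * ‖x - x₀‖ ^ k < |F x - p₂ x|} with hBad₂
  have hB1meas : MeasurableSet Bad₁ := by
    have : Bad₁ = D ∩ {x | ε * ‖x - x₀‖ ^ k < |F x - p₁ x|} := rfl
    rw [this]
    refine hD.inter (measurableSet_lt ?_ ?_)
    · exact (Continuous.mul continuous_const ((continuous_id.sub continuous_const).norm.pow k)).measurable
    · exact (hF.sub ((continuous_mpow_sum _ _).comp (continuous_id.sub continuous_const)).measurable).abs
  have hB2meas : MeasurableSet Bad₂ := by
    have : Bad₂ = D ∩ {x | ε * ‖x - x₀‖ ^ k < |F x - p₂ x|} := rfl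
    rw [this]
    refine hD.inter (measurableSet_lt ?_ ?_)
    · exact (Continuous.mul continuous_const ((continuous_id.sub continuous_const).norm.pow k)).measurable
    · exact (hF.sub ((continuous_mpow_sum _ _).comp (continuous_id.sub continuous_const)).measurable).abs
  set G : Set (Euc n) := D ∩ (Bad₁ᶜ ∩ Bad₂ᶜ) with hG
  have hG1 : DensityOneAt G x₀ :=
    densityOne_inter hD (hB1meas.compl.inter hB2meas.compl) h₁.1
      (densityOne_inter hB1meas.compl hB2meas.compl hb1 hb2)
  set t₁ : ℝ := min 1 (δ/(4*C)) with ht₁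
  have ht₁pos : 0 < t₁ := lt_min one_pos (by positivity)
  set c₀ : ℝ≥0∞ := ENNReal.ofReal (ρ^n) with hc₀
  have hc₀pos : c₀ ≠ 0 := (ENNReal.ofReal_pos.2 (pow_pos hρpos n)).ne'
  have hkey : ∀ t : ℝ, 0 < t → t ≤ t₁ → rat G x₀ t ≤ 1 - c₀ := by
    intro t ht htt₁
    have ht1 : t ≤ 1 := le_trans htt₁ (min_le_left _ _)
    set K : Set (Euc n) := closedBall (x₀ + t • ystar) (t*ρ) with hK
    have hKB : K ⊆ ball x₀ t := by
      intro x hx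
      rw [mem_closedBall] at hx
      rw [mem_ball]
      have h1 : dist x x₀ ≤ dist x (x₀ + t • ystar) + dist (x₀ + t • ystar) x₀ :=
        dist_triangle _ _ _
      have h2 : dist (x₀ + t • ystar) x₀ = t * (1/2) := by
        rw [dist_eq_norm, add_sub_cancel_left, norm_smul, hysnorm, Real.norm_eq_abs, abs_of_pos ht]
      have : t * ρ ≤ t * (1/8) := mul_le_mul_of_nonneg_left hρ18 ht.le
      calc dist x x₀ ≤ t*ρ + t*(1/2) := by rw [← h2]; linarith
        _ ≤ t*(1/8) + t*(1/2) := by linarith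
        _ < t := by linarith
    have hKG : ∀ x ∈ K, x ∉ G := by
      intro x hx hxG
      set y : Euc n := t⁻¹ • (x - x₀) with hy
      have hxy : x - x₀ = t • y := by
        rw [hy, smul_smul, mul_inv_cancel₀ ht.ne', one_smul]
      have hyball : y ∈ closedBall ystar ρ := by
        rw [mem_closedBall, dist_eq_norm]
        have : y - ystar = t⁻¹ • ((x - x₀) - t • ystar) := by
          rw [smul_sub, ← hy, smul_smul, inv_mul_cancel₀ ht.ne', one_smul]
        rw [this, norm_smul, Real.norm_eq_abs, abs_of_pos (inv_pos.2 ht)]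
        have hdist : ‖(x - x₀) - t • ystar‖ ≤ t * ρ := by
          have : (x - x₀) - t • ystar = x - (x₀ + t • ystar) := by abel
          rw [this, ← dist_eq_norm]
          exact mem_closedBall.1 hx
        calc t⁻¹ * ‖(x - x₀) - t • ystar‖ ≤ t⁻¹ * (t * ρ) :=
              mul_le_mul_of_nonneg_left hdist (by positivity)
          _ = ρ := by field_simp
      obtain ⟨hQhy, hynorm14, hynorm34⟩ := hlow y hyball
      -- lower bound on |Q (x - x₀)|
      have hQlow : δ/4 * t ^ j₀ ≤ |Q (t • y)| := by
        have htri : |t ^ j₀ * Qh y| - |Q (t • y) - t ^ j₀ * Qh y| ≤ |Q (t • y)| := by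
          have := abs_sub_abs_le_abs_sub (t ^ j₀ * Qh y) (t ^ j₀ * Qh y - Q (t • y))
          rw [abs_sub_comm] at this
          simp only [sub_sub_cancel] at this
          linarith
        have h1 : t ^ j₀ * (δ/2) ≤ |t ^ j₀ * Qh y| := by
          rw [abs_mul, abs_pow, abs_of_pos ht]
          exact mul_le_mul_of_nonneg_left hQhy (by positivity)
        have h2 : |Q (t • y) - t ^ j₀ * Qh y| ≤ C * t ^ (j₀ + 1) :=
          hrem y (by linarith) t ht ht1
        have h3 : C * t ^ (j₀ + 1) ≤ δ/4 * t ^ j₀ := by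
          have htle : t ≤ δ/(4*C) := le_trans htt₁ (min_le_right _ _)
          have : C * t ^ (j₀+1) = (C * t) * t ^ j₀ := by ring
          rw [this]
          apply mul_le_mul_of_nonneg_right _ (by positivity)
          calc C * t ≤ C * (δ/(4*C)) := mul_le_mul_of_nonneg_left htle hCpos.le
            _ = δ/4 := by field_simp
        have h1' : δ/2 * t ^ j₀ ≤ |t ^ j₀ * Qh y| := by rw [mul_comm]; exact h1
        calc δ/4 * t ^ j₀ = δ/2 * t ^ j₀ - δ/4 * t ^ j₀ := by ring
          _ ≤ |t ^ j₀ * Qh y| - |Q (t • y) - t ^ j₀ * Qh y| :=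
              sub_le_sub h1' (le_trans h2 h3)
          _ ≤ |Q (t • y)| := htri
      have hnormty : ‖t • y‖ ≤ t := by
        rw [norm_smul, Real.norm_eq_abs, abs_of_pos ht]
        calc t * ‖y‖ ≤ t * 1 := mul_le_mul_of_nonneg_left (by linarith) ht.le
          _ = t := mul_one t
      have hQbig : 2*ε*‖x - x₀‖^k < |Q (x - x₀)| := by
        rw [hxy]
        have h1 : ‖t • y‖^k ≤ t^k := pow_le_pow_left₀ (norm_nonneg _) hnormty k
        have h2 : t^k ≤ t^j₀ := pow_le_pow_of_le_one ht.le ht1 hj₀k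
        have h3 : 2*ε*‖t • y‖^k ≤ (δ/8) * t^j₀ := by
          have : 2*ε = δ/8 := by rw [hε]; ring
          rw [this]
          apply mul_le_mul_of_nonneg_left _ (by positivity)
          linarith
        have h4 : (δ/8) * t^j₀ < (δ/4) * t^j₀ := by
          apply mul_lt_mul_of_pos_right _ (by positivity)
          linarith
        linarith
      -- now x ∈ G gives contradiction
      obtain ⟨hxD, hxB⟩ := hxG
      obtain ⟨hxB1, hxB2⟩ := hxB
      rw [mem_compl_iff, hBad₁, mem_setOf_eq] at hxB1
      rw [mem_compl_iff, hBad₂, mem_setOf_eq] at hxB2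
      push_neg at hxB1 hxB2
      have e1 : |F x - p₁ x| ≤ ε * ‖x - x₀‖ ^ k := hxB1 hxD
      have e2 : |F x - p₂ x| ≤ ε * ‖x - x₀‖ ^ k := hxB2 hxD
      have : |p₁ x - p₂ x| ≤ 2 * ε * ‖x - x₀‖ ^ k := by
        have := abs_sub (F x - p₂ x) (F x - p₁ x)
        have heq : (F x - p₂ x) - (F x - p₁ x) = p₁ x - p₂ x := by ring
        calc |p₁ x - p₂ x| = |(F x - p₂ x) - (F x - p₁ x)| := by rw [heq]
          _ ≤ |F x - p₂ x| + |F x - p₁ x| := abs_sub _ _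
          _ ≤ 2 * ε * ‖x - x₀‖ ^ k := by linarith
      rw [hdiffQ] at this
      linarith [hQbig]
    -- measure estimate
    have hKmeas : MeasurableSet K := measurableSet_closedBall
    have hvolK : volume K = c₀ * volume (ball x₀ t) := by
      rw [hK, vol_closedBall_eq hn _ (by positivity), vol_ball_eq hn _ ht.le, hc₀]
      rw [← mul_assoc, ← ENNReal.ofReal_mul (by positivity)]
      congr 2
      ring
    set b := volume (ball x₀ t) with hb
    have hb0 : b ≠ 0 := vol_ball_pos x₀ ht
    have hbtop : b ≠ ⊤ := vol_ball_ne_top x₀ t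
    have hsub : G ∩ ball x₀ t ⊆ ball x₀ t \ K := by
      intro x hx
      exact ⟨hx.2, fun hK' => hKG x hK' hx.1⟩
    have hdiff : volume (ball x₀ t \ K) = b - volume K :=
      measure_diff hKB hKmeas.nullMeasurableSet (by rw [hvolK]; exact ENNReal.mul_ne_top ENNReal.ofReal_ne_top hbtop)
    have : rat G x₀ t ≤ (b - c₀ * b) / b := by
      rw [rat]
      apply ENNReal.div_le_div_right
      calc volume (G ∩ ball x₀ t) ≤ volume (ball x₀ t \ K) := measure_mono hsub
        _ = b - volume K := hdiff
        _ = b - c₀ * b := by rw [hvolK]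
    refine le_trans this ?_
    have heq : b - c₀ * b = (1 - c₀) * b := by
      rw [ENNReal.sub_mul (fun _ _ => hbtop), one_mul]
    rw [heq, mul_div_assoc, ENNReal.div_self hb0 hbtop, mul_one]
  -- conclude
  have hlt : (1:ℝ≥0∞) - c₀ < 1 := ENNReal.sub_lt_self ENNReal.one_ne_top one_ne_zero hc₀pos
  have hev1 : ∀ᶠ t in nhdsWithin (0:ℝ) (Set.Ioi 0), (1:ℝ≥0∞) - c₀ < rat G x₀ t :=
    hG1 (Ioi_mem_nhds hlt)
  have hev2 : ∀ᶠ t in nhdsWithin (0:ℝ) (Set.Ioi 0), t ∈ Set.Ioo 0 t₁ :=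
    Ioo_mem_nhdsGT_of_mem ⟨le_refl _, ht₁pos⟩
  obtain ⟨t, hlt', hmem⟩ := (hev1.and hev2).exists
  exact absurd hlt' (not_lt.2 (hkey t hmem.1 hmem.2.le))

abbrev VI (n k : ℕ) := (↥(multiIdxLe n k) → ℝ)

def extc {n k : ℕ} (c : VI n k) : (Fin n → ℕ) → ℝ :=
  fun J => if h : J ∈ multiIdxLe n k then c ⟨J, h⟩ else 0

lemma measurable_rat_param {α : Type*} [MeasurableSpace α] (hn : 0 < n)
    {S : α → Set (Euc n)} {ξ : α → Euc n} (hξ : Measurable ξ) {r : ℝ} (hr : 0 < r)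
    (hS : MeasurableSet {p : α × Euc n | p.2 ∈ S p.1}) :
    Measurable (fun a => rat (S a) (ξ a) r) := by
  set W : Set (α × Euc n) := {p | p.2 ∈ S p.1 ∧ dist p.2 (ξ p.1) < r} with hW
  have hWmeas : MeasurableSet W :=
    hS.inter (measurableSet_lt (measurable_snd.dist (hξ.comp measurable_fst)) measurable_const)
  have hkey : (fun a => rat (S a) (ξ a) r)
      = fun a => volume (Prod.mk a ⁻¹' W) / (ENNReal.ofReal (r ^ n) * volume (ball (0 : Euc n) 1)) := by
    funext a
    rw [rat, vol_ball_eq hn _ hr.le]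
    congr 1
  rw [hkey]
  exact (measurable_measure_prodMk_left hWmeas).div measurable_const

lemma bad_measurable {k : ℕ} {D : Set (Euc n)} (hD : MeasurableSet D)
    {F : Euc n → ℝ} (hF : Measurable F) (x₀ : Euc n) {p : Euc n → ℝ} (hp : Continuous p)
    (ε : ℝ) : MeasurableSet {x | x ∈ D ∧ ε * ‖x - x₀‖ ^ k < |F x - p x|} := by
  have : {x | x ∈ D ∧ ε * ‖x - x₀‖ ^ k < |F x - p x|}
      = D ∩ {x | ε * ‖x - x₀‖ ^ k < |F x - p x|} := rfl
  rw [this]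
  refine hD.inter (measurableSet_lt ?_ ?_)
  · exact (Continuous.mul continuous_const ((continuous_id.sub continuous_const).norm.pow k)).measurable
  · exact (hF.sub hp.measurable).abs

lemma graph_measurable (hn : 0 < n) (k : ℕ) {D : Set (Euc n)} (hD : MeasurableSet D)
    {F : Euc n → ℝ} (hF : Measurable F) :
    MeasurableSet {z : Euc n × VI n k | ApproxDiffAt k D F z.1
      (fun x => ∑ J ∈ multiIdxLe n k, extc z.2 J * mpow (x - z.1) J)} := by
  have hpolycont : ∀ (c : VI n k) (x₀ : Euc n),
      Continuous (fun x : Euc n => ∑ J ∈ multiIdxLe n k, extc c J * mpow (x - x₀) J) :=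
    fun c x₀ => (continuous_mpow_sum _ _).comp (continuous_id.sub continuous_const)
  set Bad : (Euc n × VI n k) → ℝ → Set (Euc n) := fun z ε =>
    {x | x ∈ D ∧ ε * ‖x - z.1‖ ^ k
      < |F x - ∑ J ∈ multiIdxLe n k, extc z.2 J * mpow (x - z.1) J|} with hBad
  have hBadmeas : ∀ z ε, MeasurableSet (Bad z ε) :=
    fun z ε => bad_measurable hD hF z.1 (hpolycont z.2 z.1) ε
  have hiff : {z : Euc n × VI n k | ApproxDiffAt k D F z.1
        (fun x => ∑ J ∈ multiIdxLe n k, extc z.2 J * mpow (x - z.1) J)}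
      = {z : Euc n × VI n k |
          Tendsto (fun m : ℕ => rat Dᶜ z.1 (((1:ℝ)/2) ^ m)) atTop (nhds 0)}
        ∩ {z : Euc n × VI n k | ∀ q : ℚ, 0 < q →
          Tendsto (fun m : ℕ => rat (Bad z q) z.1 (((1:ℝ)/2) ^ m)) atTop (nhds 0)} := by
    ext z
    simp only [mem_setOf_eq, mem_inter_iff]
    constructor
    · rintro ⟨h1, _, h3⟩
      refine ⟨(dz_iff_seq hn).1 ((densityOne_iff_dz_compl hD).1 h1), fun q hq => ?_⟩
      have hq' : (0:ℝ) < (q:ℝ) := by exact_mod_cast hq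
      exact (dz_iff_seq hn).1 ((dz_iff_densityZero (hBadmeas z q)).1 (h3 q hq'))
    · rintro ⟨hA, hB⟩
      refine ⟨(densityOne_iff_dz_compl hD).2 ((dz_iff_seq hn).2 hA),
        isPolyFun_polyform k (extc z.2) z.1, fun ε hε => ?_⟩
      obtain ⟨q, hq0, hqε⟩ := exists_rat_btwn hε
      have hq0' : 0 < q := by exact_mod_cast hq0
      have hdzq : DZ (Bad z q) z.1 := (dz_iff_seq hn).2 (hB q hq0')
      have hsub : Bad z ε ⊆ Bad z q := by
        rintro x ⟨hxD, hxlt⟩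
        refine ⟨hxD, lt_of_le_of_lt ?_ hxlt⟩
        exact mul_le_mul_of_nonneg_right hqε.le (by positivity)
      exact (dz_iff_densityZero (hBadmeas z ε)).2 (dz_mono hsub hdzq)
  rw [hiff]
  have hGmeas : Measurable (fun p : (Euc n × VI n k) × Euc n =>
      ∑ J ∈ multiIdxLe n k, extc p.1.2 J * mpow (p.2 - p.1.1) J) := by
    refine Finset.measurable_sum _ fun J hJ => Measurable.mul ?_ ?_
    · simp only [extc, dif_pos hJ]
      exact (measurable_pi_apply (⟨J, hJ⟩ : ↥(multiIdxLe n k))).comp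
        (measurable_snd.comp measurable_fst)
    · apply Continuous.measurable
      simp only [mpow]
      refine continuous_finset_prod _ fun i _ => Continuous.pow ?_ _
      exact (EuclideanSpace.proj (𝕜 := ℝ) i).continuous.comp
        (continuous_snd.sub continuous_fst.fst)
  refine MeasurableSet.inter ?_ ?_
  · refine measurableSet_tendsto (nhds 0) (fun m => ?_)
    refine measurable_rat_param hn measurable_fst (pow_pos (by norm_num) m) ?_
    exact measurable_snd (hD.compl)
  · have : {z : Euc n × VI n k | ∀ q : ℚ, 0 < q →
        Tendsto (fun m : ℕ => rat (Bad z q) z.1 (((1:ℝ)/2) ^ m)) atTop (nhds 0)}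
        = ⋂ (q : ℚ), ⋂ (_ : 0 < q), {z : Euc n × VI n k |
            Tendsto (fun m : ℕ => rat (Bad z q) z.1 (((1:ℝ)/2) ^ m)) atTop (nhds 0)} := by
      ext z; simp
    rw [this]
    refine MeasurableSet.iInter fun q => MeasurableSet.iInter fun hq => ?_
    refine measurableSet_tendsto (nhds 0) (fun m => ?_)
    refine measurable_rat_param hn measurable_fst (pow_pos (by norm_num) m) ?_
    have : {p : (Euc n × VI n k) × Euc n | p.2 ∈ Bad p.1 q}
        = {p : (Euc n × VI n k) × Euc n | p.2 ∈ D}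
          ∩ {p | (q:ℝ) * ‖p.2 - p.1.1‖ ^ k
              < |F p.2 - ∑ J ∈ multiIdxLe n k, extc p.1.2 J * mpow (p.2 - p.1.1) J|} := rfl
    rw [this]
    refine (measurable_snd hD).inter (measurableSet_lt ?_ ?_)
    · apply Continuous.measurable
      exact Continuous.mul continuous_const ((continuous_snd.sub continuous_fst.fst).norm.pow k)
    · exact ((hF.comp measurable_snd).sub hGmeas).abs

lemma approxDiffAt_fun_congr {k : ℕ} {D : Set (Euc n)} {f : Euc n → ℝ} {x₀ : Euc n}
    {p q : Euc n → ℝ} (hpq : ∀ x, p x = q x) (h : ApproxDiffAt k D f x₀ p) :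
    ApproxDiffAt k D f x₀ q := by
  obtain ⟨h1, ⟨P, hP1, hP2⟩, h3⟩ := h
  refine ⟨h1, ⟨P, hP1, fun x => (hpq x) ▸ hP2 x⟩, fun ε hε => ?_⟩
  have hset : {x | x ∈ D ∧ ε * ‖x - x₀‖ ^ k < |f x - q x|}
      = {x | x ∈ D ∧ ε * ‖x - x₀‖ ^ k < |f x - p x|} := by
    ext x
    rw [mem_setOf_eq, mem_setOf_eq, hpq x]
  rw [hset]
  exact h3 ε hε

lemma approxDiffAt_restrict_congr {k : ℕ} {D : Set (Euc n)} {f F : Euc n → ℝ}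
    (h : ∀ x ∈ D, F x = f x) {x₀ : Euc n} {p : Euc n → ℝ} :
    ApproxDiffAt k D f x₀ p ↔ ApproxDiffAt k D F x₀ p := by
  have hset : ∀ ε : ℝ, {x | x ∈ D ∧ ε * ‖x - x₀‖ ^ k < |f x - p x|}
      = {x | x ∈ D ∧ ε * ‖x - x₀‖ ^ k < |F x - p x|} := by
    intro ε
    ext x
    simp only [mem_setOf_eq]
    constructor
    · rintro ⟨h1, h2⟩; exact ⟨h1, by rw [h x h1]; exact h2⟩
    · rintro ⟨h1, h2⟩; exact ⟨h1, by rw [← h x h1]; exact h2⟩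
  constructor
  · rintro ⟨h1, h2, h3⟩
    refine ⟨h1, h2, fun ε hε => ?_⟩
    rw [← hset]
    exact h3 ε hε
  · rintro ⟨h1, h2, h3⟩
    refine ⟨h1, h2, fun ε hε => ?_⟩
    rw [hset]
    exact h3 ε hε

end P43

/-- **Proposition 4.3** (abelian case). If `f` is approximately differentiable of
order `k` a.e. on `D`, then the coefficients of the approximate derivatives can be
chosen to be measurable functions on `D`. -/
theorem stmt11 (n : ℕ) (hn : 0 < n) (D : Set (Euc n)) (hD : MeasurableSet D)
    (k : ℕ) (f : Euc n → ℝ) (hf : Measurable (D.restrict f))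
    (hdiff : ∀ᵐ x₀ ∂(volume.restrict D), ∃ p : Euc n → ℝ, ApproxDiffAt k D f x₀ p) :
    ∃ a : (Fin n → ℕ) → Euc n → ℝ,
      (∀ J ∈ multiIdxLe n k, Measurable (D.restrict (a J))) ∧
      ∀ᵐ x₀ ∂(volume.restrict D),
        ApproxDiffAt k D f x₀
          (fun x => ∑ J ∈ multiIdxLe n k, a J x₀ * mpow (x - x₀) J) :=  by
  classical
  obtain ⟨F, hFmeas, hFcomp⟩ := (MeasurableEmbedding.subtype_coe hD).exists_measurable_extend hf
    (fun _ => ⟨(0:ℝ)⟩)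
  have hFeq : ∀ x ∈ D, F x = f x := by
    intro x hx
    exact congrFun hFcomp (⟨x, hx⟩ : D)
  set Graph : Set (Euc n × P43.VI n k) := {z | ApproxDiffAt k D F z.1
    (fun x => ∑ J ∈ multiIdxLe n k, P43.extc z.2 J * mpow (x - z.1) J)} with hGraph
  have hGraphMeas : MeasurableSet Graph := P43.graph_measurable hn k hD hFmeas
  haveI := hGraphMeas.standardBorel
  set e : ↥Graph → Euc n := fun w => (w : Euc n × P43.VI n k).1 with he
  have hemeas : Measurable e := measurable_fst.comp measurable_subtype_coe
  have hinj : Function.Injective e := by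
    rintro ⟨⟨x₁, c₁⟩, hw₁⟩ ⟨⟨x₂, c₂⟩, hw₂⟩ hx
    have hx' : x₁ = x₂ := hx
    subst hx'
    have hw₁' : ApproxDiffAt k D F x₁
        (fun x => ∑ J ∈ multiIdxLe n k, P43.extc c₁ J * mpow (x - x₁) J) := hw₁
    have hw₂' : ApproxDiffAt k D F x₁
        (fun x => ∑ J ∈ multiIdxLe n k, P43.extc c₂ J * mpow (x - x₁) J) := hw₂
    have huniq := P43.coeff_unique hn hD hFmeas hw₁' hw₂'
    have hc : c₁ = c₂ := by
      funext J
      have h := huniq J.1 J.2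
      rw [P43.extc, P43.extc, dif_pos J.2, dif_pos J.2] at h
      simpa using h
    subst hc
    rfl
  have hemb : MeasurableEmbedding e := hemeas.measurableEmbedding hinj
  set g : Euc n → P43.VI n k :=
    Function.extend e (fun w => (w : Euc n × P43.VI n k).2) (fun _ => 0) with hg
  have hgmeas : Measurable g :=
    hemb.measurable_extend (measurable_snd.comp measurable_subtype_coe) measurable_const
  refine ⟨fun J x₀ => P43.extc (g x₀) J, ?_, ?_⟩
  · intro J hJ
    have h1 : Measurable fun x₀ => P43.extc (g x₀) J := by
      simp only [P43.extc, dif_pos hJ]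
      exact (measurable_pi_apply _).comp hgmeas
    exact h1.comp measurable_subtype_coe
  · filter_upwards [hdiff] with x₀ hx₀
    obtain ⟨p, hp⟩ := hx₀
    have hpF : ApproxDiffAt k D F x₀ p := (P43.approxDiffAt_restrict_congr hFeq).1 hp
    obtain ⟨c', hc'⟩ := P43.exists_expansion hpF.2.1 x₀
    set cV : P43.VI n k := fun J => c' J.1 with hcV
    have hmem : (x₀, cV) ∈ Graph := by
      show ApproxDiffAt k D F x₀
        (fun x => ∑ J ∈ multiIdxLe n k, P43.extc cV J * mpow (x - x₀) J)
      refine P43.approxDiffAt_fun_congr (fun x => ?_) hpF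
      rw [hc' x]
      refine Finset.sum_congr rfl fun J hJ => ?_
      rw [P43.extc, dif_pos hJ]
    have hgx : g x₀ = cV := by
      have hx₀e : x₀ = e ⟨(x₀, cV), hmem⟩ := rfl
      rw [hg, hx₀e, hinj.extend_apply]
    have hGm : (x₀, g x₀) ∈ Graph := by rw [hgx]; exact hmem
    have hADF : ApproxDiffAt k D F x₀
        (fun x => ∑ J ∈ multiIdxLe n k, P43.extc (g x₀) J * mpow (x - x₀) J) := hGm
    exact (P43.approxDiffAt_restrict_congr hFeq).2 hADF
end
end

section
/- (Measurability of approximate Taylor polynomials.) Let D ⊆ ℝ^n be measurable, k a positive integer, and f : D → ℝ a measurable function which has an approximate (k−1)-Taylor polynomial at almost every point of D. Then there exist measurable functions a_J : D → ℝ, one for each multi-index J with |J| ≤ k−1, such that for almost every x₀ ∈ D, f has an approximate (k−1)-Taylor polynomial at x₀ with polynomial x ↦ Σ_{|J| ≤ k−1} a_J(x₀) (x − x₀)^J. (This is the paper's Corollary 4.4 specialized to the abelian Carnot group ℝ^n.) -/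
open MeasureTheory Metric Filter

noncomputable section

namespace Stmt12Helper

open ENNReal

variable {n : ℕ}

lemma volball_pos (x : Euc n) {r : ℝ} (hr : 0 < r) : 0 < volume (ball x r) :=
  measure_ball_pos _ _ hr

lemma volball_ne_top (x : Euc n) (r : ℝ) : volume (ball x r) ≠ ⊤ := measure_ball_lt_top.ne

lemma ratio_le_one (S : Set (Euc n)) (x : Euc n) (r : ℝ) :
    volume (S ∩ ball x r) / volume (ball x r) ≤ 1 :=
  ENNReal.div_le_of_le_mul (by rw [one_mul]; exact measure_mono Set.inter_subset_right)

lemma tendsto_one_sub_iff {α : Type*} {l : Filter α} {f : α → ℝ≥0∞} (hf : ∀ a, f a ≤ 1) :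
    Tendsto (fun a => 1 - f a) l (nhds 1) ↔ Tendsto f l (nhds 0) := by
  constructor
  · intro h
    have h2 : Tendsto (fun a => 1 - (1 - f a)) l (nhds (1 - 1)) :=
      ((ENNReal.continuous_sub_left one_ne_top).tendsto 1).comp h
    have : (fun a => 1 - (1 - f a)) = f := by
      funext a; exact ENNReal.sub_sub_cancel one_ne_top (hf a)
    rw [this] at h2; simpa using h2
  · intro h
    have h2 : Tendsto (fun a => 1 - f a) l (nhds (1 - 0)) :=
      ((ENNReal.continuous_sub_left one_ne_top).tendsto 0).comp h
    simpa using h2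

lemma ennreal_sub_div {a v : ℝ≥0∞} (hav : a ≤ v) (h0 : v ≠ 0) (ht : v ≠ ⊤) :
    (v - a) / v = 1 - a / v := by
  rw [ENNReal.sub_div (fun _ _ => h0), ENNReal.div_self h0 ht]

lemma densityZero_iff {S : Set (Euc n)} (hS : MeasurableSet S) (x : Euc n) :
    DensityZeroAt S x ↔
      Tendsto (fun r : ℝ => volume (S ∩ ball x r) / volume (ball x r))
        (nhdsWithin 0 (Set.Ioi 0)) (nhds 0) := by
  unfold DensityZeroAt DensityOneAt
  have hev : ∀ᶠ r : ℝ in nhdsWithin 0 (Set.Ioi 0),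
      volume (Sᶜ ∩ ball x r) / volume (ball x r)
        = 1 - volume (S ∩ ball x r) / volume (ball x r) := by
    filter_upwards [self_mem_nhdsWithin] with r hr
    have hr : (0:ℝ) < r := hr
    have hdiff : Sᶜ ∩ ball x r = ball x r \ (S ∩ ball x r) := by
      ext y; simp [Set.mem_diff]; tauto
    rw [hdiff, measure_diff Set.inter_subset_right
        ((hS.inter measurableSet_ball).nullMeasurableSet)
        (((measure_mono Set.inter_subset_right).trans_lt measure_ball_lt_top).ne),
      ennreal_sub_div (measure_mono Set.inter_subset_right)
        (volball_pos x hr).ne' (volball_ne_top x r)]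
  rw [Filter.tendsto_congr' hev]
  exact tendsto_one_sub_iff (fun r => ratio_le_one S x r)

lemma densityZero_anti {S T : Set (Euc n)} (hS : MeasurableSet S) (hT : MeasurableSet T)
    (hsub : S ⊆ T) {x : Euc n} (h : DensityZeroAt T x) : DensityZeroAt S x := by
  rw [densityZero_iff hS]
  rw [densityZero_iff hT] at h
  refine tendsto_of_tendsto_of_tendsto_of_le_of_le' tendsto_const_nhds h
    (Eventually.of_forall fun r => zero_le)
    (Eventually.of_forall fun r =>
      ENNReal.div_le_div_right (measure_mono (Set.inter_subset_inter_left _ hsub)) _)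

lemma densityOne_iff_compl {S : Set (Euc n)} {x : Euc n} :
    DensityOneAt S x ↔ DensityZeroAt Sᶜ x := by
  unfold DensityZeroAt; rw [compl_compl]

lemma densityOne_inter {A B : Set (Euc n)} (hA : MeasurableSet A) (hB : MeasurableSet B)
    {x : Euc n} (h1 : DensityOneAt A x) (h2 : DensityOneAt B x) : DensityOneAt (A ∩ B) x := by
  rw [densityOne_iff_compl] at h1 h2 ⊢
  rw [densityZero_iff hA.compl] at h1
  rw [densityZero_iff hB.compl] at h2
  rw [Set.compl_inter, densityZero_iff (hA.compl.union hB.compl)]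
  have : Tendsto (fun r : ℝ =>
      volume (Aᶜ ∩ ball x r) / volume (ball x r)
        + volume (Bᶜ ∩ ball x r) / volume (ball x r))
      (nhdsWithin 0 (Set.Ioi 0)) (nhds (0 + 0)) := h1.add h2
  refine tendsto_of_tendsto_of_tendsto_of_le_of_le' tendsto_const_nhds (by simpa using this)
    (Eventually.of_forall fun r => zero_le)
    (Eventually.of_forall fun r => ?_)
  rw [← ENNReal.add_div]
  refine ENNReal.div_le_div_right ?_ _
  rw [Set.union_inter_distrib_right]
  exact measure_union_le _ _



open ENNReal

variable {n : ℕ}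

lemma euc_nontrivial (hn : 0 < n) : Nontrivial (Euc n) := by
  refine ⟨⟨EuclideanSpace.single ⟨0, hn⟩ 1, 0, fun h => ?_⟩⟩
  have := congrFun (congrArg (fun z : Euc n => (z : Fin n → ℝ)) h) ⟨0, hn⟩
  simp [EuclideanSpace.single_apply] at this

lemma volball_eq (hn : 0 < n) (x : Euc n) {r : ℝ} (hr : 0 ≤ r) :
    volume (ball x r) = ENNReal.ofReal (r ^ n) * volume (ball (0 : Euc n) 1) := by
  haveI := euc_nontrivial hn
  rw [Measure.addHaar_ball volume x hr, finrank_euclideanSpace_fin]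

/-- Multiplicative sequential criterion for the ratio tending to zero. -/
def seqCond (S : Set (Euc n)) (x : Euc n) : Prop :=
  ∀ j : ℕ, ∃ i : ℕ, ∀ q : ℚ, 0 < (q : ℝ) → (q : ℝ) < 1 / (i + 1) →
    ((j : ℝ≥0∞) + 1) * volume (S ∩ ball x (q : ℝ)) ≤ volume (ball x (q : ℝ))

lemma tendsto_zero_iff_seqCond (hn : 0 < n) (S : Set (Euc n)) (x : Euc n) :
    Tendsto (fun r : ℝ => volume (S ∩ ball x r) / volume (ball x r))
      (nhdsWithin 0 (Set.Ioi 0)) (nhds 0) ↔ seqCond S x := by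
  constructor
  · intro h j
    have hj0 : ((j : ℝ≥0∞) + 1) ≠ 0 := by simp
    have hjt : ((j : ℝ≥0∞) + 1) ≠ ⊤ := by simp
    have hinvpos : (0 : ℝ≥0∞) < ((j : ℝ≥0∞) + 1)⁻¹ := by
      simp [ENNReal.inv_pos, hjt]
    have hev := (ENNReal.tendsto_nhds_zero.1 h) _ hinvpos
    rw [eventually_nhdsWithin_iff, Metric.eventually_nhds_iff] at hev
    obtain ⟨δ, hδ, hδ'⟩ := hev
    obtain ⟨i, hi⟩ := exists_nat_one_div_lt hδ
    refine ⟨i, fun q hq hq' => ?_⟩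
    have hlt : dist (q : ℝ) 0 < δ := by
      rw [Real.dist_eq, sub_zero, abs_of_pos hq]; linarith
    have hrat := hδ' hlt hq
    -- from ratio ≤ (j+1)⁻¹ deduce (j+1) * vol ≤ volB
    have hv0 : volume (ball x (q:ℝ)) ≠ 0 := (volball_pos x hq).ne'
    have hvt : volume (ball x (q:ℝ)) ≠ ⊤ := volball_ne_top x _
    have := mul_le_mul_right hrat ((j : ℝ≥0∞) + 1)
    calc ((j : ℝ≥0∞) + 1) * volume (S ∩ ball x (q:ℝ))
        = ((j : ℝ≥0∞) + 1) * (volume (S ∩ ball x (q:ℝ)) / volume (ball x (q:ℝ)))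
            * volume (ball x (q:ℝ)) := by
          rw [mul_assoc, ENNReal.div_mul_cancel hv0 hvt]
      _ ≤ ((j : ℝ≥0∞) + 1) * ((j : ℝ≥0∞) + 1)⁻¹ * volume (ball x (q:ℝ)) := by
          exact mul_le_mul_left this _
      _ = volume (ball x (q:ℝ)) := by
          rw [ENNReal.mul_inv_cancel hj0 hjt, one_mul]
  · intro h
    rw [ENNReal.tendsto_nhds_zero]
    intro ε hε
    -- choose j with 2^n * (j+1)⁻¹ ≤ ε
    have hε2 : ε / 2 ^ n ≠ 0 := by
      simp only [ne_eq, ENNReal.div_eq_zero_iff, not_or]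
      exact ⟨hε.ne', by simp⟩
    obtain ⟨j, hj⟩ := ENNReal.exists_inv_nat_lt hε2
    have hjle : ((j : ℝ≥0∞) + 1)⁻¹ ≤ ε / 2 ^ n := by
      refine le_trans ?_ hj.le
      exact ENNReal.inv_le_inv.2 (by exact_mod_cast Nat.le_succ j)
    obtain ⟨i, hi⟩ := h j
    rw [eventually_nhdsWithin_iff, Metric.eventually_nhds_iff]
    refine ⟨1 / (2 * (i + 1)), by positivity, fun {r} hrd hr => ?_⟩
    have hr : (0:ℝ) < r := hr
    have hrs : r < 1 / (2 * (i + 1)) := by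
      rw [Real.dist_eq, sub_zero, abs_of_pos hr] at hrd; exact hrd
    obtain ⟨q, hq1, hq2⟩ := exists_rat_btwn (by linarith : r < 2 * r)
    have hq0 : 0 < (q : ℝ) := lt_trans hr hq1
    have hqi : (q : ℝ) < 1 / (i + 1) := by
      have h2i : (2:ℝ) * (1/(2*((i:ℝ)+1))) = 1/((i:ℝ)+1) := by
        field_simp
      nlinarith
    have hkey := hi q hq0 hqi
    -- volume (ball x q) ≤ 2^n * volume (ball x r)
    have hballs : volume (ball x (q:ℝ)) ≤ 2 ^ n * volume (ball x r) := by
      rw [volball_eq hn x hq0.le, volball_eq hn x hr.le, ← mul_assoc]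
      refine mul_le_mul_left ?_ _
      have h1 : (q:ℝ) ^ n ≤ 2 ^ n * r ^ n := by
        calc (q:ℝ) ^ n ≤ (2*r) ^ n := by
              exact pow_le_pow_left₀ hq0.le hq2.le n
          _ = 2 ^ n * r ^ n := by rw [mul_pow]
      calc ENNReal.ofReal ((q:ℝ) ^ n) ≤ ENNReal.ofReal (2 ^ n * r ^ n) :=
            ENNReal.ofReal_le_ofReal h1
        _ = 2 ^ n * ENNReal.ofReal (r ^ n) := by
            rw [ENNReal.ofReal_mul (by positivity)]
            congr 1
            rw [ENNReal.ofReal_pow (by norm_num : (0:ℝ) ≤ 2)]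
            norm_num
    have hmono : volume (S ∩ ball x r) ≤ volume (S ∩ ball x (q:ℝ)) :=
      measure_mono (Set.inter_subset_inter_right _ (ball_subset_ball hq1.le))
    -- conclude
    have hj0 : ((j : ℝ≥0∞) + 1) ≠ 0 := by simp
    have hjt : ((j : ℝ≥0∞) + 1) ≠ ⊤ := by simp
    have hchain : volume (S ∩ ball x r) ≤ ((j : ℝ≥0∞) + 1)⁻¹ * (2 ^ n * volume (ball x r)) := by
      calc volume (S ∩ ball x r)
          = ((j : ℝ≥0∞) + 1)⁻¹ * (((j : ℝ≥0∞) + 1) * volume (S ∩ ball x r)) := by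
            rw [← mul_assoc, ENNReal.inv_mul_cancel hj0 hjt, one_mul]
        _ ≤ ((j : ℝ≥0∞) + 1)⁻¹ * volume (ball x (q:ℝ)) :=
            mul_le_mul_right (le_trans (mul_le_mul_right hmono _) hkey) _
        _ ≤ ((j : ℝ≥0∞) + 1)⁻¹ * (2 ^ n * volume (ball x r)) :=
            mul_le_mul_right hballs _
    have : volume (S ∩ ball x r) ≤ ε * volume (ball x r) := by
      refine hchain.trans ?_
      rw [← mul_assoc]
      refine mul_le_mul_left ?_ _
      calc ((j : ℝ≥0∞) + 1)⁻¹ * 2 ^ n ≤ ε / 2 ^ n * 2 ^ n := mul_le_mul_left hjle _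
        _ = ε := by
            rw [ENNReal.div_mul_cancel (by simp) (by simp)]
    exact ENNReal.div_le_of_le_mul this
lemma measurableSet_densityZero {W : Type*} [MeasurableSpace W] (hn : 0 < n)
    {T : Set (W × Euc n)} (hT : MeasurableSet T) {ξ : W → Euc n} (hξ : Measurable ξ) :
    MeasurableSet {w : W | DensityZeroAt {x | (w, x) ∈ T} (ξ w)} := by
  have hslice : ∀ w : W, MeasurableSet {x : Euc n | (w, x) ∈ T} :=
    fun w => measurable_prodMk_left hT
  have hset : {w : W | DensityZeroAt {x | (w, x) ∈ T} (ξ w)} =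
      ⋂ j : ℕ, ⋃ i : ℕ, ⋂ q : ℚ,
        {w : W | 0 < (q:ℝ) → (q:ℝ) < 1/((i:ℝ)+1) →
          ((j : ℝ≥0∞)+1) * volume ({x : Euc n | (w, x) ∈ T} ∩ ball (ξ w) (q:ℝ))
            ≤ volume (ball (ξ w) (q:ℝ))} := by
    ext w
    rw [Set.mem_setOf_eq, densityZero_iff (hslice w), tendsto_zero_iff_seqCond hn]
    simp only [seqCond, Set.mem_iInter, Set.mem_iUnion, Set.mem_setOf_eq]
  rw [hset]
  refine MeasurableSet.iInter fun j => MeasurableSet.iUnion fun i =>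
    MeasurableSet.iInter fun q => ?_
  by_cases h1 : 0 < (q:ℝ)
  · by_cases h2 : (q:ℝ) < 1/((i:ℝ)+1)
    · have hU : MeasurableSet {p : W × Euc n | dist p.2 (ξ p.1) < (q:ℝ)} := by
        exact measurableSet_lt (measurable_snd.dist (hξ.comp measurable_fst)) measurable_const
      have hF : Measurable fun w : W =>
          volume (Prod.mk w ⁻¹' (T ∩ {p : W × Euc n | dist p.2 (ξ p.1) < (q:ℝ)})) :=
        measurable_measure_prodMk_left (hT.inter hU)
      have hEq : ∀ w : W, {x : Euc n | (w,x) ∈ T} ∩ ball (ξ w) (q:ℝ)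
          = Prod.mk w ⁻¹' (T ∩ {p : W × Euc n | dist p.2 (ξ p.1) < (q:ℝ)}) := by
        intro w; ext x; simp [mem_ball, Set.mem_preimage]
      have hsetEq : {w : W | 0 < (q:ℝ) → (q:ℝ) < 1/((i:ℝ)+1) →
          ((j : ℝ≥0∞)+1) * volume ({x : Euc n | (w, x) ∈ T} ∩ ball (ξ w) (q:ℝ))
            ≤ volume (ball (ξ w) (q:ℝ))}
          = {w : W | ((j : ℝ≥0∞)+1) *
              volume (Prod.mk w ⁻¹' (T ∩ {p : W × Euc n | dist p.2 (ξ p.1) < (q:ℝ)}))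
              ≤ volume (ball (0 : Euc n) (q:ℝ))} := by
        ext w
        rw [Set.mem_setOf_eq, Set.mem_setOf_eq, hEq w,
          Measure.addHaar_ball_center volume (ξ w)]
        exact ⟨fun h => h h1 h2, fun h _ _ => h⟩
      rw [hsetEq]
      exact measurableSet_le (measurable_const.mul hF) measurable_const
    · have : {w : W | 0 < (q:ℝ) → (q:ℝ) < 1/((i:ℝ)+1) →
          ((j : ℝ≥0∞)+1) * volume ({x : Euc n | (w, x) ∈ T} ∩ ball (ξ w) (q:ℝ))
            ≤ volume (ball (ξ w) (q:ℝ))} = Set.univ := by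
        ext w
        simp only [Set.mem_setOf_eq, Set.mem_univ, iff_true]
        intro _ hc; exact absurd hc h2
      rw [this]; exact MeasurableSet.univ
  · have : {w : W | 0 < (q:ℝ) → (q:ℝ) < 1/((i:ℝ)+1) →
        ((j : ℝ≥0∞)+1) * volume ({x : Euc n | (w, x) ∈ T} ∩ ball (ξ w) (q:ℝ))
          ≤ volume (ball (ξ w) (q:ℝ))} = Set.univ := by
      ext w
      simp only [Set.mem_setOf_eq, Set.mem_univ, iff_true]
      intro hc; exact absurd hc h1
    rw [this]; exact MeasurableSet.univ
open MvPolynomial in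
lemma eval_bind₁' {n : ℕ} (f : Fin n → ℝ) (g : Fin n → MvPolynomial (Fin n) ℝ)
    (φ : MvPolynomial (Fin n) ℝ) :
    eval f (bind₁ g φ) = eval (fun i => eval f (g i)) φ :=
  eval₂Hom_bind₁ _ _ _ _

lemma mem_multiIdxLt_iff {k : ℕ} {J : Fin n → ℕ} :
    J ∈ multiIdxLt n k ↔ (∀ i, J i < k + 1) ∧ mdeg J < k := by
  unfold multiIdxLt
  rw [Finset.mem_filter, Fintype.mem_piFinset]
  simp [Finset.mem_range]

lemma mem_multiIdxLt_of_mdeg {k : ℕ} {J : Fin n → ℕ} (h : mdeg J < k) :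
    J ∈ multiIdxLt n k := by
  rw [mem_multiIdxLt_iff]
  refine ⟨fun i => ?_, h⟩
  have : J i ≤ mdeg J := Finset.single_le_sum (fun i _ => Nat.zero_le _) (Finset.mem_univ i)
  omega

open MvPolynomial in
lemma eval_as_multiIdx_sum {k : ℕ} (hk : 0 < k) (P : MvPolynomial (Fin n) ℝ)
    (hP : P.totalDegree ≤ k - 1) (y : Euc n) :
    eval (fun i => y i) P
      = ∑ J ∈ multiIdxLt n k,
          coeff (Finsupp.equivFunOnFinite.symm J) P * mpow y J := by
  classical
  rw [eval_eq']
  have hinj : ∀ J ∈ multiIdxLt n k, ∀ J' ∈ multiIdxLt n k,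
      Finsupp.equivFunOnFinite.symm J = Finsupp.equivFunOnFinite.symm J' → J = J' :=
    fun J _ J' _ h => Finsupp.equivFunOnFinite.symm.injective h
  have himg : ∑ d ∈ (multiIdxLt n k).image (fun J => Finsupp.equivFunOnFinite.symm J),
      coeff d P * ∏ i, y i ^ d i
      = ∑ J ∈ multiIdxLt n k, coeff (Finsupp.equivFunOnFinite.symm J) P * mpow y J := by
    rw [Finset.sum_image hinj]
    exact Finset.sum_congr rfl fun J _ => rfl
  rw [← himg]
  refine Finset.sum_subset ?_ ?_
  · intro d hd
    rw [Finset.mem_image]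
    refine ⟨Finsupp.equivFunOnFinite d, ?_, by simp⟩
    refine mem_multiIdxLt_of_mdeg ?_
    have hsum : mdeg (Finsupp.equivFunOnFinite d) = d.sum fun _ e => e := by
      rw [Finsupp.sum_fintype _ _ (fun i => rfl)]
      rfl
    have := MvPolynomial.le_totalDegree hd
    omega
  · intro d _ hd
    rw [MvPolynomial.notMem_support_iff.1 hd, zero_mul]

open MvPolynomial in
lemma totalDegree_bind₁_shift (a : Fin n → ℝ) (P : MvPolynomial (Fin n) ℝ) :
    (bind₁ (fun i => X i + C (a i)) P).totalDegree ≤ P.totalDegree := by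
  conv_lhs => rw [P.as_sum]
  rw [map_sum]
  refine (MvPolynomial.totalDegree_finset_sum _ _).trans ?_
  rw [Finset.sup_le_iff]
  intro d hd
  rw [MvPolynomial.bind₁_monomial]
  refine (MvPolynomial.totalDegree_mul _ _).trans ?_
  rw [MvPolynomial.totalDegree_C, zero_add]
  refine (MvPolynomial.totalDegree_finset_prod _ _).trans ?_
  have hterm : ∀ i ∈ d.support,
      ((X i + C (a i) : MvPolynomial (Fin n) ℝ) ^ d i).totalDegree ≤ d i := by
    intro i _
    refine (MvPolynomial.totalDegree_pow _ _).trans ?_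
    have h1 : (X i + C (a i) : MvPolynomial (Fin n) ℝ).totalDegree ≤ 1 := by
      refine (MvPolynomial.totalDegree_add _ _).trans ?_
      rw [MvPolynomial.totalDegree_X, MvPolynomial.totalDegree_C]
      simp
    calc d i * (X i + C (a i) : MvPolynomial (Fin n) ℝ).totalDegree ≤ d i * 1 :=
          Nat.mul_le_mul_left _ h1
      _ = d i := mul_one _
  refine (Finset.sum_le_sum hterm).trans ?_
  have := MvPolynomial.le_totalDegree hd
  rw [Finsupp.sum] at this
  exact this

open MvPolynomial in
lemma isPolyFun_centered_sum {k : ℕ} (hk : 0 < k) (c : {J // J ∈ multiIdxLt n k} → ℝ)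
    (x₀ : Euc n) :
    IsPolyFun n (k - 1)
      (fun x => ∑ J ∈ (multiIdxLt n k).attach, c J * mpow (x - x₀) J.1) := by
  classical
  set P₀ : MvPolynomial (Fin n) ℝ :=
    ∑ J ∈ (multiIdxLt n k).attach, monomial (Finsupp.equivFunOnFinite.symm J.1) (c J) with hP₀
  have hdeg₀ : P₀.totalDegree ≤ k - 1 := by
    refine (MvPolynomial.totalDegree_finset_sum _ _).trans ?_
    rw [Finset.sup_le_iff]
    intro J _
    by_cases hc : c J = 0
    · simp [hc]
    · rw [MvPolynomial.totalDegree_monomial _ hc]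
      have hJ : mdeg J.1 < k := (mem_multiIdxLt_iff.1 J.2).2
      have hsum : (Finsupp.equivFunOnFinite.symm J.1).sum (fun _ e => e) = mdeg J.1 := by
        rw [Finsupp.sum_fintype _ _ (fun i => rfl)]
        unfold mdeg
        refine Finset.sum_congr rfl fun i _ => ?_
        rfl
      omega
  refine ⟨bind₁ (fun i => X i + C (-(x₀ i))) P₀, ?_, ?_⟩
  · exact (totalDegree_bind₁_shift _ _).trans hdeg₀
  · intro x
    rw [eval_bind₁']
    have heval : ∀ y : Euc n, eval (fun i => y i) P₀
        = ∑ J ∈ (multiIdxLt n k).attach, c J * mpow y J.1 := by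
      intro y
      rw [hP₀, map_sum]
      refine Finset.sum_congr rfl fun J _ => ?_
      rw [MvPolynomial.eval_monomial]
      congr 1
      rw [Finsupp.prod_fintype _ _ (fun i => pow_zero _)]
      unfold mpow
      refine Finset.prod_congr rfl fun i _ => ?_
      rfl
    have harg : (fun i => eval (fun i' => x i') (X i + C (-(x₀ i))))
        = fun i => (x - x₀) i := by
      funext i
      simp [sub_eq_add_neg]
    rw [harg, heval (x - x₀)]

open MvPolynomial in
lemma recenter_poly {k : ℕ} (hk : 0 < k) {p : Euc n → ℝ} (hp : IsPolyFun n (k - 1) p)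
    (x₀ : Euc n) :
    ∃ c : {J // J ∈ multiIdxLt n k} → ℝ,
      ∀ x : Euc n, p x = ∑ J ∈ (multiIdxLt n k).attach, c J * mpow (x - x₀) J.1 := by
  classical
  obtain ⟨P, hPdeg, hPeval⟩ := hp
  set P' : MvPolynomial (Fin n) ℝ := bind₁ (fun i => X i + C (x₀ i)) P with hP'
  have hdeg' : P'.totalDegree ≤ k - 1 := (totalDegree_bind₁_shift _ _).trans hPdeg
  refine ⟨fun J => coeff (Finsupp.equivFunOnFinite.symm J.1) P', fun x => ?_⟩
  have h1 : eval (fun i => (x - x₀) i) P' = eval (fun i => x i) P := by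
    rw [hP', eval_bind₁']
    have harg : (fun i => eval (fun i' => (x - x₀) i') (X i + C (x₀ i))) = fun i => x i := by
      funext i
      simp
    rw [harg]
  have h2 := eval_as_multiIdx_sum hk P' hdeg' (x - x₀)
  rw [hPeval, ← h1, h2, ← Finset.sum_attach (multiIdxLt n k)
    (fun J => coeff (Finsupp.equivFunOnFinite.symm J) P' * mpow (x - x₀) J)]

open MvPolynomial in
lemma coeffs_eq_zero_of_sum_eq_zero {k : ℕ} (b : {J // J ∈ multiIdxLt n k} → ℝ)
    (h : ∀ y : Euc n, ∑ J ∈ (multiIdxLt n k).attach, b J * mpow y J.1 = 0) :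
    ∀ J, b J = 0 := by
  classical
  set R : MvPolynomial (Fin n) ℝ :=
    ∑ J ∈ (multiIdxLt n k).attach, monomial (Finsupp.equivFunOnFinite.symm J.1) (b J) with hR
  have hevalR : ∀ z : Fin n → ℝ, eval z R = 0 := by
    intro z
    have hy : ∀ i, ((WithLp.equiv 2 (Fin n → ℝ)).symm z : Euc n) i = z i := fun i => rfl
    have := h ((WithLp.equiv 2 (Fin n → ℝ)).symm z)
    rw [hR, map_sum]
    rw [← this]
    refine Finset.sum_congr rfl fun J _ => ?_
    rw [MvPolynomial.eval_monomial]
    congr 1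
    rw [Finsupp.prod_fintype _ _ (fun i => pow_zero _)]
    unfold mpow
    refine Finset.prod_congr rfl fun i _ => ?_
    rfl
  have hR0 : R = 0 := by
    refine MvPolynomial.funext fun z => ?_
    rw [hevalR z, map_zero]
  intro J
  have hcoeff : coeff (Finsupp.equivFunOnFinite.symm J.1) R = b J := by
    rw [hR, MvPolynomial.coeff_sum]
    rw [Finset.sum_eq_single J]
    · rw [MvPolynomial.coeff_monomial, if_pos rfl]
    · intro J' _ hne
      rw [MvPolynomial.coeff_monomial, if_neg]
      intro heq
      exact hne (Subtype.ext (Finsupp.equivFunOnFinite.symm.injective heq))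
    · intro hJ
      exact absurd (Finset.mem_attach _ J) hJ
  rw [← hcoeff, hR0]
  simp

lemma mpow_smul (t : ℝ) (y : Euc n) (J : Fin n → ℕ) :
    mpow (t • y) J = t ^ mdeg J * mpow y J := by
  unfold mpow mdeg
  rw [← Finset.prod_pow_eq_pow_sum, ← Finset.prod_mul_distrib]
  refine Finset.prod_congr rfl fun i _ => ?_
  rw [PiLp.smul_apply, smul_eq_mul, mul_pow]

lemma continuous_coord (i : Fin n) : Continuous fun y : Euc n => y i :=
  (EuclideanSpace.proj (𝕜 := ℝ) i).continuous

lemma continuous_mpow (J : Fin n → ℕ) : Continuous fun y : Euc n => mpow y J := by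
  unfold mpow
  exact continuous_finset_prod _ fun i _ => (continuous_coord i).pow _

lemma le_of_ratio_le {a v ε : ℝ≥0∞} (h0 : v ≠ 0) (ht : v ≠ ⊤) (h : a / v ≤ ε) :
    a ≤ ε * v := by
  calc a = a / v * v := (ENNReal.div_mul_cancel h0 ht).symm
    _ ≤ ε * v := mul_le_mul_left h v

lemma polynomial_zero_of_small (C₀ : ℝ) :
    ∀ (k : ℕ) (p : Polynomial ℝ), p.natDegree < k →
      ∀ t : ℕ → ℝ, (∀ m, 0 < t m) → Tendsto t atTop (nhds 0) →
      (∀ m, |p.eval (t m)| ≤ C₀ * t m ^ k) → p = 0 := by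
  intro k
  induction k with
  | zero => intro p hp; exact absurd hp (Nat.not_lt_zero _)
  | succ k ih =>
    intro p hp t ht htend hb
    have heval0 : p.eval 0 = 0 := by
      have h1 : Tendsto (fun m => p.eval (t m)) atTop (nhds (p.eval 0)) :=
        (p.continuous.tendsto 0).comp htend
      have hbnd : Tendsto (fun m => C₀ * t m ^ (k+1)) atTop (nhds 0) := by
        have := (htend.pow (k+1)).const_mul C₀
        simpa using this
      have h2 : Tendsto (fun m => p.eval (t m)) atTop (nhds 0) :=
        squeeze_zero_norm (fun m => by rw [Real.norm_eq_abs]; exact hb m) hbnd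
      exact tendsto_nhds_unique h1 h2
    have hXdvd : Polynomial.X ∣ p :=
      Polynomial.X_dvd_iff.2 (by rw [Polynomial.coeff_zero_eq_eval_zero]; exact heval0)
    obtain ⟨q, hq⟩ := hXdvd
    by_cases hq0 : q = 0
    · rw [hq, hq0, mul_zero]
    have hqdeg : q.natDegree < k := by
      have hpd : p.natDegree = 1 + q.natDegree := by
        rw [hq, Polynomial.natDegree_mul Polynomial.X_ne_zero hq0, Polynomial.natDegree_X]
      omega
    have hqb : ∀ m, |q.eval (t m)| ≤ C₀ * t m ^ k := by
      intro m
      have hbm := hb m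
      rw [hq, Polynomial.eval_mul, Polynomial.eval_X, abs_mul, abs_of_pos (ht m)] at hbm
      have hrw : C₀ * t m ^ (k+1) = (C₀ * t m ^ k) * t m := by rw [pow_succ]; ring
      rw [hrw, mul_comm (t m) _] at hbm
      exact le_of_mul_le_mul_right hbm (ht m)
    have hq0' := ih q hqdeg t ht htend hqb
    rw [hq, hq0', mul_zero]

lemma rigidity {k : ℕ} (hk : 0 < k) (b : {J // J ∈ multiIdxLt n k} → ℝ)
    (x₀ : Euc n) (G : Set (Euc n)) (hGm : MeasurableSet G) (hG1 : DensityOneAt G x₀)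
    (C₀ : ℝ) (hC₀ : 0 ≤ C₀)
    (hb : ∀ x ∈ G, |∑ J ∈ (multiIdxLt n k).attach, b J * mpow (x - x₀) J.1|
        ≤ C₀ * ‖x - x₀‖ ^ k) :
    ∀ J, b J = 0 := by
  classical
  set q : Euc n → ℝ := fun z => ∑ J ∈ (multiIdxLt n k).attach, b J * mpow z J.1 with hqdef
  have hpoly : ∀ y : Euc n, ∃ py : Polynomial ℝ,
      py.natDegree < k ∧ ∀ t : ℝ, py.eval t = q (t • y) := by
    intro y
    refine ⟨∑ J ∈ (multiIdxLt n k).attach,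
      Polynomial.C (b J * mpow y J.1) * Polynomial.X ^ (mdeg J.1), ?_, ?_⟩
    · have h1 : (∑ J ∈ (multiIdxLt n k).attach,
          Polynomial.C (b J * mpow y J.1) * Polynomial.X ^ (mdeg J.1)).natDegree ≤ k - 1 := by
        refine Polynomial.natDegree_sum_le_of_forall_le _ _ fun J _ => ?_
        refine (Polynomial.natDegree_C_mul_X_pow_le _ _).trans ?_
        have := (mem_multiIdxLt_iff.1 J.2).2
        omega
      omega
    · intro t
      rw [Polynomial.eval_finset_sum, hqdef]
      refine Finset.sum_congr rfl fun J _ => ?_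
      rw [Polynomial.eval_mul, Polynomial.eval_C, Polynomial.eval_pow, Polynomial.eval_X,
        mpow_smul]
      ring
  have hzero : Tendsto (fun r : ℝ => volume (Gᶜ ∩ ball x₀ r) / volume (ball x₀ r))
      (nhdsWithin 0 (Set.Ioi 0)) (nhds 0) := by
    rw [← densityZero_iff hGm.compl]
    exact densityOne_iff_compl.1 hG1
  have hex : ∀ m : ℕ, ∃ r : ℝ, 0 < r ∧ r ≤ (2:ℝ)⁻¹ ^ m ∧
      volume (Gᶜ ∩ ball x₀ r) ≤ (2:ℝ≥0∞)⁻¹ ^ m * volume (ball x₀ r) := by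
    intro m
    have hev := (ENNReal.tendsto_nhds_zero.1 hzero) ((2:ℝ≥0∞)⁻¹ ^ m)
      (by simp [pos_iff_ne_zero])
    rw [eventually_nhdsWithin_iff, Metric.eventually_nhds_iff] at hev
    obtain ⟨δ, hδ, hδ'⟩ := hev
    have hrpos : 0 < min (δ/2) ((2:ℝ)⁻¹ ^ m) := lt_min (by linarith) (by positivity)
    refine ⟨min (δ/2) ((2:ℝ)⁻¹ ^ m), hrpos, min_le_right _ _, ?_⟩
    have h1 : dist (min (δ/2) ((2:ℝ)⁻¹ ^ m)) 0 < δ := by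
      rw [Real.dist_eq, sub_zero, abs_of_pos hrpos]
      calc min (δ/2) ((2:ℝ)⁻¹ ^ m) ≤ δ/2 := min_le_left _ _
        _ < δ := by linarith
    have h2 := hδ' h1 (Set.mem_Ioi.2 hrpos)
    exact le_of_ratio_le (volball_pos x₀ hrpos).ne' (volball_ne_top _ _) h2
  choose r hr0 hrle hrm using hex
  have htr : Tendsto r atTop (nhds 0) := by
    refine squeeze_zero (fun m => (hr0 m).le) hrle ?_
    exact tendsto_pow_atTop_nhds_zero_of_lt_one (by norm_num) (by norm_num)
  set Φ : ℕ → Euc n → Euc n := fun m y => x₀ + r m • y with hΦ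
  have hpre : ∀ (m : ℕ) (A : Set (Euc n)),
      volume (Φ m ⁻¹' A) = ENNReal.ofReal |((r m) ^ n)⁻¹| * volume A := by
    intro m A
    have h1 : Φ m ⁻¹' A
        = (fun y : Euc n => (r m) • y) ⁻¹' ((fun z : Euc n => x₀ + z) ⁻¹' A) := rfl
    rw [h1, Measure.addHaar_preimage_smul volume (hr0 m).ne',
      measure_preimage_add volume x₀ A, finrank_euclideanSpace_fin]
  have hball : ∀ m, Φ m ⁻¹' (ball x₀ (r m)) = ball (0 : Euc n) 1 := by
    intro m
    ext y
    simp only [hΦ, Set.mem_preimage, mem_ball, dist_eq_norm, add_sub_cancel_left,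
      norm_smul, Real.norm_eq_abs, abs_of_pos (hr0 m), sub_zero]
    rw [mul_lt_iff_lt_one_right (hr0 m)]
  have hEb : ∀ m, volume (ball (0 : Euc n) 1 \ Φ m ⁻¹' G)
      ≤ (2:ℝ≥0∞)⁻¹ ^ m * volume (ball (0 : Euc n) 1) := by
    intro m
    have h1 : ball (0 : Euc n) 1 \ Φ m ⁻¹' G = Φ m ⁻¹' (Gᶜ ∩ ball x₀ (r m)) := by
      rw [Set.preimage_inter, Set.preimage_compl, hball m, Set.diff_eq, Set.inter_comm]
    rw [h1, hpre]
    calc ENNReal.ofReal |((r m) ^ n)⁻¹| * volume (Gᶜ ∩ ball x₀ (r m))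
        ≤ ENNReal.ofReal |((r m) ^ n)⁻¹| * ((2:ℝ≥0∞)⁻¹ ^ m * volume (ball x₀ (r m))) :=
          mul_le_mul_right (hrm m) _
      _ = (2:ℝ≥0∞)⁻¹ ^ m * (ENNReal.ofReal |((r m) ^ n)⁻¹| * volume (ball x₀ (r m))) := by
          ring
      _ = (2:ℝ≥0∞)⁻¹ ^ m * volume (ball (0 : Euc n) 1) := by
          rw [← hpre m, hball m]
  set Egood : Set (Euc n) := ⋃ M : ℕ, ⋂ m : ℕ, ⋂ (_ : M ≤ m), Φ m ⁻¹' G with hEgood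
  have hnull : volume (ball (0 : Euc n) 1 \ Egood) = 0 := by
    have hle : ∀ M : ℕ, volume (ball (0 : Euc n) 1 \ Egood)
        ≤ (2:ℝ≥0∞)⁻¹ ^ M * (2 * volume (ball (0 : Euc n) 1)) := by
      intro M
      have hsub : ball (0 : Euc n) 1 \ Egood ⊆
          ⋃ i : ℕ, (ball (0 : Euc n) 1 \ Φ (M + i) ⁻¹' G) := by
        intro y hy
        rw [Set.mem_diff, hEgood, Set.mem_iUnion] at hy
        obtain ⟨hyb, hyn⟩ := hy
        by_contra hcon
        rw [Set.mem_iUnion] at hcon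
        push_neg at hcon
        refine hyn ⟨M, ?_⟩
        rw [Set.mem_iInter]
        intro m
        rw [Set.mem_iInter]
        intro hMm
        have h3 := hcon (m - M)
        rw [Set.mem_diff] at h3
        push_neg at h3
        have h2 := h3 hyb
        rwa [Nat.add_sub_cancel' hMm] at h2
      refine (measure_mono hsub).trans ?_
      refine (measure_iUnion_le _).trans ?_
      calc ∑' i : ℕ, volume (ball (0 : Euc n) 1 \ Φ (M + i) ⁻¹' G)
          ≤ ∑' i : ℕ, (2:ℝ≥0∞)⁻¹ ^ (M + i) * volume (ball (0 : Euc n) 1) :=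
            ENNReal.tsum_le_tsum fun i => hEb (M + i)
        _ = (2:ℝ≥0∞)⁻¹ ^ M * volume (ball (0 : Euc n) 1) * ∑' i : ℕ, (2:ℝ≥0∞)⁻¹ ^ i := by
            rw [← ENNReal.tsum_mul_left]
            congr 1
            funext i
            rw [pow_add]
            ring
        _ = (2:ℝ≥0∞)⁻¹ ^ M * (2 * volume (ball (0 : Euc n) 1)) := by
            rw [ENNReal.tsum_geometric, ENNReal.one_sub_inv_two, inv_inv]
            ring
    have htend0 : Tendsto (fun M : ℕ => (2:ℝ≥0∞)⁻¹ ^ M * (2 * volume (ball (0 : Euc n) 1)))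
        atTop (nhds 0) := by
      have h1 : Tendsto (fun M : ℕ => (2:ℝ≥0∞)⁻¹ ^ M) atTop (nhds 0) :=
        ENNReal.tendsto_pow_atTop_nhds_zero_of_lt_one (ENNReal.inv_lt_one.2 one_lt_two)
      have h2 := ENNReal.Tendsto.mul_const h1
        (Or.inr (ENNReal.mul_ne_top (ENNReal.ofNat_ne_top (n := 2)) (volball_ne_top (0 : Euc n) 1)))
      simpa using h2
    have := ge_of_tendsto' htend0 hle
    exact le_antisymm this zero_le
  have hptwise : ∀ y : Euc n, y ∈ ball (0 : Euc n) 1 → y ∈ Egood → q y = 0 := by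
    intro y hyb hyE
    rw [hEgood, Set.mem_iUnion] at hyE
    obtain ⟨M, hM⟩ := hyE
    simp only [Set.mem_iInter] at hM
    obtain ⟨py, hdeg, heval⟩ := hpoly y
    have hbound : ∀ i : ℕ, |py.eval (r (i + M))| ≤ C₀ * (r (i + M)) ^ k := by
      intro i
      have hmem : Φ (i + M) y ∈ G := hM (i + M) (Nat.le_add_left M i)
      have hx := hb _ hmem
      have hsub : Φ (i + M) y - x₀ = r (i + M) • y := by
        rw [hΦ]
        exact add_sub_cancel_left x₀ _
      rw [hsub] at hx
      rw [heval]
      refine hx.trans ?_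
      have hnorm : ‖r (i + M) • y‖ = r (i + M) * ‖y‖ := by
        rw [norm_smul, Real.norm_eq_abs, abs_of_pos (hr0 _)]
      rw [hnorm, mul_pow]
      have hy1 : ‖y‖ ≤ 1 := by
        rw [mem_ball_zero_iff] at hyb
        exact hyb.le
      have hyk : ‖y‖ ^ k ≤ 1 := pow_le_one₀ (norm_nonneg y) hy1
      have h5 : r (i + M) ^ k * ‖y‖ ^ k ≤ r (i + M) ^ k :=
        mul_le_of_le_one_right (pow_pos (hr0 (i + M)) k).le hyk
      exact mul_le_mul_of_nonneg_left h5 hC₀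
    have hpy0 : py = 0 := by
      refine polynomial_zero_of_small C₀ k py hdeg (fun i => r (i + M))
        (fun i => hr0 _) ?_ hbound
      exact htr.comp (tendsto_add_atTop_nat M)
    have h1 := heval 1
    rw [hpy0] at h1
    rw [one_smul] at h1
    simpa using h1.symm
  have hcont : Continuous q := by
    rw [hqdef]
    exact continuous_finset_sum _ fun J _ => continuous_const.mul (continuous_mpow J.1)
  have hball0 : ∀ y ∈ ball (0 : Euc n) 1, q y = 0 := by
    by_contra hcon
    push_neg at hcon
    obtain ⟨y₀, hy₀b, hy₀⟩ := hcon
    have hUopen : IsOpen (ball (0 : Euc n) 1 ∩ q ⁻¹' ({0}ᶜ)) :=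
      isOpen_ball.inter (hcont.isOpen_preimage _ isOpen_compl_singleton)
    have hUsub : ball (0 : Euc n) 1 ∩ q ⁻¹' ({0}ᶜ) ⊆ ball (0 : Euc n) 1 \ Egood := by
      intro z hz
      exact ⟨hz.1, fun hzE => hz.2 (hptwise z hz.1 hzE)⟩
    have hU0 : volume (ball (0 : Euc n) 1 ∩ q ⁻¹' ({0}ᶜ)) = 0 :=
      le_antisymm ((measure_mono hUsub).trans hnull.le) zero_le
    have hpos : 0 < volume (ball (0 : Euc n) 1 ∩ q ⁻¹' ({0}ᶜ)) :=
      hUopen.measure_pos volume ⟨y₀, hy₀b, hy₀⟩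
    rw [hU0] at hpos
    exact lt_irrefl _ hpos
  have hall : ∀ y : Euc n, q y = 0 := by
    intro y
    obtain ⟨py, hdeg, heval⟩ := hpoly y
    have hεpos : 0 < (‖y‖ + 1)⁻¹ := by positivity
    have hroots : {x : ℝ | py.IsRoot x}.Infinite := by
      refine (Set.infinite_coe_iff.1 (Set.Ioo.infinite hεpos)).mono ?_
      intro t ht
      obtain ⟨ht0, htε⟩ := ht
      have htb : t • y ∈ ball (0 : Euc n) 1 := by
        rw [mem_ball_zero_iff, norm_smul, Real.norm_eq_abs, abs_of_pos ht0]
        calc t * ‖y‖ ≤ t * (‖y‖ + 1) := by nlinarith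
          _ < (‖y‖ + 1)⁻¹ * (‖y‖ + 1) := by
              have : (0:ℝ) < ‖y‖ + 1 := by positivity
              exact mul_lt_mul_of_pos_right htε this
          _ = 1 := by
              field_simp
      show py.IsRoot t
      rw [Polynomial.IsRoot, heval t, hball0 _ htb]
    have hpy0 := Polynomial.eq_zero_of_infinite_isRoot py hroots
    have h1 := heval 1
    rw [hpy0, one_smul] at h1
    simpa using h1.symm
  exact coeffs_eq_zero_of_sum_eq_zero b hall

variable {k : ℕ}

/-- The candidate polynomial with coefficients `c` centered at `x₀`. -/
def pcFun (n k : ℕ) (c : {J // J ∈ multiIdxLt n k} → ℝ) (x₀ x : Euc n) : ℝ :=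
  ∑ J ∈ (multiIdxLt n k).attach, c J * mpow (x - x₀) J.1

lemma continuous_pcFun (c : {J // J ∈ multiIdxLt n k} → ℝ) (x₀ : Euc n) :
    Continuous (pcFun n k c x₀) := by
  unfold pcFun
  exact continuous_finset_sum _ fun J _ => continuous_const.mul
    ((continuous_mpow J.1).comp (continuous_id.sub continuous_const))

/-- Exceptional set for constant `M`. -/
def BadSet (n k : ℕ) (D : Set (Euc n)) (g : Euc n → ℝ) (x₀ : Euc n)
    (c : {J // J ∈ multiIdxLt n k} → ℝ) (M : ℝ) : Set (Euc n) :=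
  {x | x ∈ D ∧ M * ‖x - x₀‖ ^ k < |g x - pcFun n k c x₀ x|}

lemma badSet_measurable {D : Set (Euc n)} (hD : MeasurableSet D) {g : Euc n → ℝ}
    (hg : Measurable g) (x₀ : Euc n) (c : {J // J ∈ multiIdxLt n k} → ℝ) (M : ℝ) :
    MeasurableSet (BadSet n k D g x₀ c M) := by
  have h1 : Measurable fun x : Euc n => M * ‖x - x₀‖ ^ k := by
    exact (continuous_const.mul (((continuous_id.sub continuous_const).norm).pow k)).measurable
  have h2 : Measurable fun x : Euc n => |g x - pcFun n k c x₀ x| :=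
    (hg.sub (continuous_pcFun c x₀).measurable).abs
  exact hD.inter (measurableSet_lt h1 h2)

/-- The joint predicate. -/
def PP (n k : ℕ) (D : Set (Euc n)) (g : Euc n → ℝ)
    (w : Euc n × ({J // J ∈ multiIdxLt n k} → ℝ)) : Prop :=
  DensityOneAt D w.1 ∧ ∃ m : ℕ, DensityZeroAt (BadSet n k D g w.1 w.2 ((m:ℝ)+1)) w.1

lemma measurableSet_densityOne_fst {W : Type*} [MeasurableSpace W] (hn : 0 < n)
    {D : Set (Euc n)} (hD : MeasurableSet D) {ξ : W → Euc n} (hξ : Measurable ξ) :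
    MeasurableSet {w : W | DensityOneAt D (ξ w)} := by
  have hT : MeasurableSet {p : W × Euc n | p.2 ∈ Dᶜ} := measurable_snd hD.compl
  have h := measurableSet_densityZero hn hT hξ
  have heq : {w : W | DensityZeroAt {x | (w, x) ∈ {p : W × Euc n | p.2 ∈ Dᶜ}} (ξ w)}
      = {w : W | DensityOneAt D (ξ w)} := by
    ext w
    rw [Set.mem_setOf_eq, Set.mem_setOf_eq, densityOne_iff_compl]
    rfl
  rwa [heq] at h

lemma measurableSet_PP (hn : 0 < n) {D : Set (Euc n)} (hD : MeasurableSet D)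
    {g : Euc n → ℝ} (hg : Measurable g) :
    MeasurableSet {w : Euc n × ({J // J ∈ multiIdxLt n k} → ℝ) | PP n k D g w} := by
  have hsplit : {w : Euc n × ({J // J ∈ multiIdxLt n k} → ℝ) | PP n k D g w}
      = {w : Euc n × ({J // J ∈ multiIdxLt n k} → ℝ) | DensityOneAt D w.1}
        ∩ ⋃ m : ℕ, {w : Euc n × ({J // J ∈ multiIdxLt n k} → ℝ) |
            DensityZeroAt (BadSet n k D g w.1 w.2 ((m:ℝ)+1)) w.1} := by
    ext w
    simp only [PP, Set.mem_setOf_eq, Set.mem_inter_iff, Set.mem_iUnion]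
  rw [hsplit]
  refine MeasurableSet.inter (measurableSet_densityOne_fst hn hD measurable_fst) ?_
  refine MeasurableSet.iUnion fun m => ?_
  have hT : MeasurableSet {p : (Euc n × ({J // J ∈ multiIdxLt n k} → ℝ)) × Euc n |
      p.2 ∈ D ∧ ((m:ℝ)+1) * ‖p.2 - p.1.1‖ ^ k < |g p.2 - pcFun n k p.1.2 p.1.1 p.2|} := by
    refine MeasurableSet.inter (measurable_snd hD) ?_
    have h1 : Measurable fun p : (Euc n × ({J // J ∈ multiIdxLt n k} → ℝ)) × Euc n =>
        ((m:ℝ)+1) * ‖p.2 - p.1.1‖ ^ k := by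
      exact (continuous_const.mul
        (((continuous_snd.sub (continuous_fst.comp continuous_fst)).norm).pow k)).measurable
    have h2 : Measurable fun p : (Euc n × ({J // J ∈ multiIdxLt n k} → ℝ)) × Euc n =>
        |g p.2 - pcFun n k p.1.2 p.1.1 p.2| := by
      refine Measurable.abs (Measurable.sub (hg.comp measurable_snd) ?_)
      have : Continuous fun p : (Euc n × ({J // J ∈ multiIdxLt n k} → ℝ)) × Euc n =>
          pcFun n k p.1.2 p.1.1 p.2 := by
        unfold pcFun
        refine continuous_finset_sum _ fun J _ => ?_
        exact ((continuous_apply J).comp (continuous_snd.comp continuous_fst)).mul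
          ((continuous_mpow J.1).comp
            (continuous_snd.sub (continuous_fst.comp continuous_fst)))
      exact this.measurable
    exact measurableSet_lt h1 h2
  have h := measurableSet_densityZero hn hT measurable_fst
  exact h

lemma PP_to_taylor (hk : 0 < k) {D : Set (Euc n)} {f g : Euc n → ℝ}
    (hgD : ∀ x ∈ D, g x = f x) {x₀ : Euc n} {c : {J // J ∈ multiIdxLt n k} → ℝ}
    (h : PP n k D g (x₀, c)) :
    HasApproxTaylorAt k D f x₀ (pcFun n k c x₀) := by
  obtain ⟨h1, m, h2⟩ := h
  refine ⟨h1, isPolyFun_centered_sum hk c x₀, (m:ℝ)+1, by positivity, ?_⟩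
  have hset : {x | x ∈ D ∧ ((m:ℝ)+1) * ‖x - x₀‖ ^ k < |f x - pcFun n k c x₀ x|}
      = BadSet n k D g x₀ c ((m:ℝ)+1) := by
    ext x
    simp only [BadSet, Set.mem_setOf_eq]
    constructor
    · rintro ⟨hxD, hlt⟩
      exact ⟨hxD, by rwa [hgD x hxD]⟩
    · rintro ⟨hxD, hlt⟩
      exact ⟨hxD, by rwa [hgD x hxD] at hlt⟩
  rw [hset]
  exact h2

lemma exists_PP (hk : 0 < k) {D : Set (Euc n)} (hD : MeasurableSet D)
    {f g : Euc n → ℝ} (hg : Measurable g) (hgD : ∀ x ∈ D, g x = f x)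
    {x₀ : Euc n} {p : Euc n → ℝ} (hp : HasApproxTaylorAt k D f x₀ p) :
    ∃ c : {J // J ∈ multiIdxLt n k} → ℝ, PP n k D g (x₀, c) := by
  obtain ⟨h1, hpoly, M, hM, hzero⟩ := hp
  obtain ⟨c, hc⟩ := recenter_poly hk hpoly x₀
  refine ⟨c, h1, ⌈M⌉₊, ?_⟩
  have hset : {x | x ∈ D ∧ M * ‖x - x₀‖ ^ k < |f x - p x|} = BadSet n k D g x₀ c M := by
    ext x
    simp only [BadSet, Set.mem_setOf_eq]
    have hpc : pcFun n k c x₀ x = p x := (hc x).symm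
    constructor
    · rintro ⟨hxD, hlt⟩
      exact ⟨hxD, by rwa [hgD x hxD, hpc]⟩
    · rintro ⟨hxD, hlt⟩
      exact ⟨hxD, by rwa [hgD x hxD, hpc] at hlt⟩
  rw [hset] at hzero
  refine densityZero_anti (badSet_measurable hD hg x₀ c _)
    (badSet_measurable hD hg x₀ c M) ?_ hzero
  rintro x ⟨hxD, hlt⟩
  refine ⟨hxD, lt_of_le_of_lt ?_ hlt⟩
  have hle : M ≤ (⌈M⌉₊ : ℝ) + 1 := by
    have := Nat.le_ceil M
    linarith
  exact mul_le_mul_of_nonneg_right hle (by positivity)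

lemma PP_unique (hk : 0 < k) {D : Set (Euc n)} (hD : MeasurableSet D)
    {g : Euc n → ℝ} (hg : Measurable g) {x₀ : Euc n}
    {c c' : {J // J ∈ multiIdxLt n k} → ℝ}
    (h : PP n k D g (x₀, c)) (h' : PP n k D g (x₀, c')) : c = c' := by
  obtain ⟨h1, m, h2⟩ := h
  obtain ⟨_, m', h2'⟩ := h'
  have hGm : MeasurableSet
      ((D ∩ (BadSet n k D g x₀ c ((m:ℝ)+1))ᶜ) ∩ (BadSet n k D g x₀ c' ((m':ℝ)+1))ᶜ) :=
    (hD.inter (badSet_measurable hD hg x₀ c _).compl).inter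
      (badSet_measurable hD hg x₀ c' _).compl
  have hG1 : DensityOneAt
      ((D ∩ (BadSet n k D g x₀ c ((m:ℝ)+1))ᶜ) ∩ (BadSet n k D g x₀ c' ((m':ℝ)+1))ᶜ) x₀ :=
    densityOne_inter (hD.inter (badSet_measurable hD hg x₀ c _).compl)
      (badSet_measurable hD hg x₀ c' _).compl
      (densityOne_inter hD (badSet_measurable hD hg x₀ c _).compl h1 h2) h2'
  have hb : ∀ x ∈ (D ∩ (BadSet n k D g x₀ c ((m:ℝ)+1))ᶜ) ∩ (BadSet n k D g x₀ c' ((m':ℝ)+1))ᶜ,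
      |∑ J ∈ (multiIdxLt n k).attach, (c J - c' J) * mpow (x - x₀) J.1|
        ≤ (((m:ℝ)+1) + ((m':ℝ)+1)) * ‖x - x₀‖ ^ k := by
    rintro x ⟨⟨hxD, hx1⟩, hx2⟩
    rw [Set.mem_compl_iff] at hx1 hx2
    have e1 : |g x - pcFun n k c x₀ x| ≤ ((m:ℝ)+1) * ‖x - x₀‖ ^ k := by
      by_contra hcon
      push_neg at hcon
      exact hx1 ⟨hxD, hcon⟩
    have e2 : |g x - pcFun n k c' x₀ x| ≤ ((m':ℝ)+1) * ‖x - x₀‖ ^ k := by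
      by_contra hcon
      push_neg at hcon
      exact hx2 ⟨hxD, hcon⟩
    have hsum : ∑ J ∈ (multiIdxLt n k).attach, (c J - c' J) * mpow (x - x₀) J.1
        = (g x - pcFun n k c' x₀ x) - (g x - pcFun n k c x₀ x) := by
      have hx : (g x - pcFun n k c' x₀ x) - (g x - pcFun n k c x₀ x)
          = pcFun n k c x₀ x - pcFun n k c' x₀ x := by ring
      rw [hx]
      unfold pcFun
      rw [← Finset.sum_sub_distrib]
      exact Finset.sum_congr rfl fun J _ => by ring
    rw [hsum]
    calc |(g x - pcFun n k c' x₀ x) - (g x - pcFun n k c x₀ x)|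
        ≤ |g x - pcFun n k c' x₀ x| + |g x - pcFun n k c x₀ x| := abs_sub _ _
      _ ≤ ((m':ℝ)+1) * ‖x - x₀‖ ^ k + ((m:ℝ)+1) * ‖x - x₀‖ ^ k := add_le_add e2 e1
      _ = (((m:ℝ)+1) + ((m':ℝ)+1)) * ‖x - x₀‖ ^ k := by ring
  have hz := rigidity hk (fun J => c J - c' J) x₀ _ hGm hG1
    (((m:ℝ)+1) + ((m':ℝ)+1)) (by positivity) hb
  funext J
  exact sub_eq_zero.1 (hz J)

end Stmt12Helper

open Stmt12Helper in
/-- **Corollary 4.4** (abelian case). If `f` has an approximate `(k−1)`-Taylor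
polynomial a.e. on `D`, then its coefficients can be chosen to be measurable
functions on `D`. -/
theorem stmt12 (n : ℕ) (hn : 0 < n) (D : Set (Euc n)) (hD : MeasurableSet D)
    (k : ℕ) (hk : 0 < k) (f : Euc n → ℝ) (hf : Measurable (D.restrict f))
    (htay : ∀ᵐ x₀ ∂(volume.restrict D), ∃ p : Euc n → ℝ, HasApproxTaylorAt k D f x₀ p) :
    ∃ a : (Fin n → ℕ) → Euc n → ℝ,
      (∀ J ∈ multiIdxLt n k, Measurable (D.restrict (a J))) ∧
      ∀ᵐ x₀ ∂(volume.restrict D),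
        HasApproxTaylorAt k D f x₀
          (fun x => ∑ J ∈ multiIdxLt n k, a J x₀ * mpow (x - x₀) J) := by
  classical
  set g : Euc n → ℝ := fun x => if hx : x ∈ D then D.restrict f ⟨x, hx⟩ else (0:ℝ) with hgdef
  have hg : Measurable g := Measurable.dite hf measurable_const hD
  have hgD : ∀ x ∈ D, g x = f x := by
    intro x hx
    rw [hgdef]
    simp only [hx, dif_pos]
    rfl
  have hnull : (volume.restrict D)
      {x₀ | ¬ ∃ p : Euc n → ℝ, HasApproxTaylorAt k D f x₀ p} = 0 := ae_iff.1 htay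
  obtain ⟨N', hsubN, hNm, hN0⟩ := exists_measurable_superset_of_null hnull
  have hDdm : MeasurableSet {x₀ : Euc n | DensityOneAt D x₀} :=
    measurableSet_densityOne_fst hn hD measurable_id
  set D' : Set (Euc n) := (D ∩ {x₀ | DensityOneAt D x₀}) ∩ N'ᶜ with hD'def
  have hD'm : MeasurableSet D' := (hD.inter hDdm).inter hNm.compl
  set G' : Set (Euc n × ({J // J ∈ multiIdxLt n k} → ℝ)) :=
    ({w | PP n k D g w} ∩ (D' ×ˢ (Set.univ : Set ({J // J ∈ multiIdxLt n k} → ℝ))))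
      ∪ ((D'ᶜ) ×ˢ ({0} : Set ({J // J ∈ multiIdxLt n k} → ℝ))) with hG'def
  have hG'm : MeasurableSet G' :=
    ((measurableSet_PP hn hD hg).inter (hD'm.prod MeasurableSet.univ)).union
      (hD'm.compl.prod (measurableSet_singleton 0))
  have hmem_iff : ∀ (x₀ : Euc n) (c : {J // J ∈ multiIdxLt n k} → ℝ),
      (x₀, c) ∈ G' ↔ ((PP n k D g (x₀, c) ∧ x₀ ∈ D') ∨ (x₀ ∉ D' ∧ c = 0)) := by
    intro x₀ c
    simp only [hG'def, Set.mem_union, Set.mem_inter_iff, Set.mem_prod, Set.mem_univ,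
      and_true, Set.mem_singleton_iff, Set.mem_setOf_eq, Set.mem_compl_iff]
  have hexist : ∀ x₀ ∈ D', ∃ c : {J // J ∈ multiIdxLt n k} → ℝ, PP n k D g (x₀, c) := by
    intro x₀ hx₀
    obtain ⟨⟨hxD, hxdd⟩, hxN⟩ := hx₀
    have hex : ∃ p : Euc n → ℝ, HasApproxTaylorAt k D f x₀ p := by
      by_contra hcon
      exact hxN (hsubN hcon)
    obtain ⟨p, hp⟩ := hex
    exact exists_PP hk hD hg hgD hp
  have hslice : ∀ x₀ : Euc n, ∃ c : {J // J ∈ multiIdxLt n k} → ℝ, (x₀, c) ∈ G' := by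
    intro x₀
    by_cases hx₀ : x₀ ∈ D'
    · obtain ⟨c, hc⟩ := hexist x₀ hx₀
      exact ⟨c, (hmem_iff x₀ c).2 (Or.inl ⟨hc, hx₀⟩)⟩
    · exact ⟨0, (hmem_iff x₀ 0).2 (Or.inr ⟨hx₀, rfl⟩)⟩
  have huniq : ∀ (x₀ : Euc n) (c c' : {J // J ∈ multiIdxLt n k} → ℝ),
      (x₀, c) ∈ G' → (x₀, c') ∈ G' → c = c' := by
    intro x₀ c c' hc hc'
    rw [hmem_iff] at hc hc'
    rcases hc with ⟨hPc, hx₀⟩ | ⟨hx₀, hc0⟩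
    · rcases hc' with ⟨hPc', _⟩ | ⟨hx₀', _⟩
      · exact PP_unique hk hD hg hPc hPc'
      · exact absurd hx₀ hx₀'
    · rcases hc' with ⟨_, hx₀'⟩ | ⟨_, hc0'⟩
      · exact absurd hx₀' hx₀
      · rw [hc0, hc0']
  set sel : Euc n → ({J // J ∈ multiIdxLt n k} → ℝ) :=
    fun x₀ => (hslice x₀).choose with hseldef
  have hselmem : ∀ x₀, (x₀, sel x₀) ∈ G' := fun x₀ => (hslice x₀).choose_spec
  haveI hSB : StandardBorelSpace ↥G' := hG'm.standardBorel
  have hemeas : Measurable (fun z : ↥G' => z.val.1) :=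
    measurable_fst.comp measurable_subtype_coe
  have heinj : Function.Injective (fun z : ↥G' => z.val.1) := by
    intro z z' hzz
    simp only at hzz
    apply Subtype.ext
    have hz : (z.val.1, z.val.2) ∈ G' := by
      rw [Prod.mk.eta]
      exact z.prop
    have hz' : (z.val.1, z'.val.2) ∈ G' := by
      rw [hzz, Prod.mk.eta]
      exact z'.prop
    have h2 : z.val.2 = z'.val.2 := huniq z.val.1 z.val.2 z'.val.2 hz hz'
    exact Prod.ext hzz h2
  have hemb := hemeas.measurableEmbedding heinj
  have hselmeas : Measurable sel := by
    intro B hB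
    have himg : sel ⁻¹' B = (fun z : ↥G' => z.val.1) '' {z : ↥G' | z.val.2 ∈ B} := by
      ext x₀
      simp only [Set.mem_preimage, Set.mem_image, Set.mem_setOf_eq]
      constructor
      · intro hx
        exact ⟨⟨(x₀, sel x₀), hselmem x₀⟩, hx, rfl⟩
      · rintro ⟨z, hz2, hz1⟩
        have hzmem : (x₀, z.val.2) ∈ G' := by
          rw [← hz1, Prod.mk.eta]
          exact z.prop
        have heq : z.val.2 = sel x₀ := huniq x₀ z.val.2 (sel x₀) hzmem (hselmem x₀)
        rwa [← heq]
    rw [himg]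
    exact hemb.measurableSet_image.2 ((measurable_snd.comp measurable_subtype_coe) hB)
  refine ⟨fun J x₀ => if h : J ∈ multiIdxLt n k then sel x₀ ⟨J, h⟩ else 0, ?_, ?_⟩
  · intro J hJ
    have h1 : Measurable fun x₀ : Euc n => sel x₀ ⟨J, hJ⟩ :=
      (measurable_pi_apply _).comp hselmeas
    have h2 : (D.restrict fun x₀ => if h : J ∈ multiIdxLt n k then sel x₀ ⟨J, h⟩ else 0)
        = fun z : ↥D => sel z.val ⟨J, hJ⟩ := by
      funext z
      simp only [Set.restrict_apply, hJ, dif_pos]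
      rfl
    rw [h2]
    exact h1.comp measurable_subtype_coe
  · have hae1 : ∀ᵐ x₀ ∂(volume.restrict D), x₀ ∈ D := ae_restrict_mem hD
    have hae2 : ∀ᵐ x₀ ∂(volume.restrict D), x₀ ∉ N' := by
      rw [ae_iff]
      simpa using hN0
    have hae3 : ∀ᵐ x₀ ∂(volume.restrict D), DensityOneAt D x₀ := by
      filter_upwards [htay] with x₀ hx
      obtain ⟨p, hp⟩ := hx
      exact hp.1
    filter_upwards [hae1, hae2, hae3] with x₀ hxD hxN hxdd
    have hx₀D' : x₀ ∈ D' := ⟨⟨hxD, hxdd⟩, hxN⟩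
    have hPP : PP n k D g (x₀, sel x₀) := by
      rcases (hmem_iff x₀ (sel x₀)).1 (hselmem x₀) with ⟨hP, _⟩ | ⟨hx, _⟩
      · exact hP
      · exact absurd hx₀D' hx
    have hTay := PP_to_taylor hk hgD hPP
    have hfun : (fun x => ∑ J ∈ multiIdxLt n k,
        (if h : J ∈ multiIdxLt n k then sel x₀ ⟨J, h⟩ else 0) * mpow (x - x₀) J)
        = pcFun n k (sel x₀) x₀ := by
      funext x
      unfold pcFun
      rw [← Finset.sum_attach (multiIdxLt n k)
        (fun J => (if h : J ∈ multiIdxLt n k then sel x₀ ⟨J, h⟩ else 0) * mpow (x - x₀) J)]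
      refine Finset.sum_congr rfl fun J _ => ?_
      rw [dif_pos J.2, Subtype.coe_eta]
    rw [hfun]
    exact hTay
end
end

section
/- Let f : ℝ^n → ℝ be measurable, k a nonnegative integer, and suppose f is approximately differentiable of order k at almost every point of ℝ^n. For h ∈ ℕ, h ≥ 1, define the truncation f_h : ℝ^n → ℝ by f_h(x) = f(x) if −h < f(x) < h, f_h(x) = h if f(x) ≥ h, and f_h(x) = −h if f(x) ≤ −h. Then: (a) f_h is approximately differentiable of order k at almost every point of ℝ^n; and (b) if x₀ is a point at which the set {x ∈ ℝ^n : −h < f(x) < h} has density one and at which f is approximately differentiable of order k with polynomial p, then f_h is approximately differentiable of order k at x₀ with the same polynomial p. (This is the paper's truncation lemma, Lemma 4.5, specialized to the abelian Carnot group ℝ^n.) -/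
open MeasureTheory Metric Filter

noncomputable section

variable {n : ℕ}

lemma ball_ne_zero (_hn : 0 < n) (x : Euc n) {r : ℝ} (hr : 0 < r) :
    volume (ball x r) ≠ 0 := (measure_ball_pos volume x hr).ne'

lemma ball_ne_top (x : Euc n) (r : ℝ) : volume (ball x r) ≠ ⊤ :=
  measure_ball_lt_top.ne

lemma densityOne_mono (hn : 0 < n) {S T : Set (Euc n)} {x : Euc n}
    (hST : S ⊆ T) (hS : DensityOneAt S x) : DensityOneAt T x := by
  apply tendsto_of_tendsto_of_tendsto_of_le_of_le' hS tendsto_const_nhds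
  · exact Eventually.of_forall fun r =>
      ENNReal.div_le_div_right (measure_mono (Set.inter_subset_inter_left _ hST)) _
  · filter_upwards [self_mem_nhdsWithin] with r hr
    rw [← ENNReal.div_self (ball_ne_zero hn x hr) (ball_ne_top x r)]
    exact ENNReal.div_le_div_right (measure_mono Set.inter_subset_right) _

lemma densityOne_univ (hn : 0 < n) (x : Euc n) : DensityOneAt (Set.univ : Set (Euc n)) x := by
  apply Tendsto.congr' _ (tendsto_const_nhds (x := (1 : ENNReal)))
  filter_upwards [self_mem_nhdsWithin] with r hr
  rw [Set.univ_inter, ENNReal.div_self (ball_ne_zero hn x hr) (ball_ne_top x r)]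

lemma densityOne_compl_tendsto_zero (hn : 0 < n) {A : Set (Euc n)} {x : Euc n}
    (hA : MeasurableSet A) (dA : DensityOneAt A x) :
    Tendsto (fun r : ℝ => volume (Aᶜ ∩ ball x r) / volume (ball x r))
      (nhdsWithin 0 (Set.Ioi 0)) (nhds 0) := by
  have key : ∀ r : ℝ, 0 < r → volume (Aᶜ ∩ ball x r) / volume (ball x r)
      = 1 - volume (A ∩ ball x r) / volume (ball x r) := by
    intro r hr
    have h1 : volume (A ∩ ball x r) + volume (Aᶜ ∩ ball x r) = volume (ball x r) := by
      have := measure_inter_add_diff (μ := volume) (ball x r) hA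
      rw [Set.inter_comm, Set.diff_eq, Set.inter_comm _ Aᶜ] at this
      exact this
    have h2 : volume (Aᶜ ∩ ball x r) = volume (ball x r) - volume (A ∩ ball x r) := by
      rw [← h1, ENNReal.add_sub_cancel_left ((measure_mono Set.inter_subset_right).trans_lt measure_ball_lt_top).ne]
    rw [h2, ENNReal.sub_div (fun _ _ => ball_ne_zero hn x hr),
      ENNReal.div_self (ball_ne_zero hn x hr) (ball_ne_top x r)]
  have : Tendsto (fun r : ℝ => 1 - volume (A ∩ ball x r) / volume (ball x r))
      (nhdsWithin 0 (Set.Ioi 0)) (nhds (1 - 1)) :=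
    ENNReal.Tendsto.sub tendsto_const_nhds dA (Or.inl ENNReal.one_ne_top)
  rw [tsub_self] at this
  apply this.congr'
  filter_upwards [self_mem_nhdsWithin] with r hr using (key r hr).symm

lemma densityOne_inter (hn : 0 < n) {A B : Set (Euc n)} {x : Euc n}
    (hA : MeasurableSet A) (dA : DensityOneAt A x) (dB : DensityOneAt B x) :
    DensityOneAt (A ∩ B) x := by
  have hc := densityOne_compl_tendsto_zero hn hA dA
  have lo : Tendsto (fun r : ℝ => volume (B ∩ ball x r) / volume (ball x r)
      - volume (Aᶜ ∩ ball x r) / volume (ball x r)) (nhdsWithin 0 (Set.Ioi 0))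
      (nhds 1) := by
    have := ENNReal.Tendsto.sub dB hc (Or.inl ENNReal.one_ne_top)
    simpa using this
  apply tendsto_of_tendsto_of_tendsto_of_le_of_le' lo tendsto_const_nhds
  · apply Eventually.of_forall
    intro r
    rw [tsub_le_iff_right]
    calc volume (B ∩ ball x r) / volume (ball x r)
        ≤ (volume (A ∩ B ∩ ball x r) + volume (Aᶜ ∩ ball x r)) / volume (ball x r) := by
          apply ENNReal.div_le_div_right
          refine le_trans (measure_mono ?_) (measure_union_le _ _)
          intro y ⟨hyB, hyb⟩
          by_cases hyA : y ∈ A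
          · exact Or.inl ⟨⟨hyA, hyB⟩, hyb⟩
          · exact Or.inr ⟨hyA, hyb⟩
      _ = _ := ENNReal.add_div
  · filter_upwards [self_mem_nhdsWithin] with r hr
    rw [← ENNReal.div_self (ball_ne_zero hn x hr) (ball_ne_top x r)]
    exact ENNReal.div_le_div_right (measure_mono Set.inter_subset_right) _

lemma densityOne_of_closedBall (hn : 0 < n) {S : Set (Euc n)} {x : Euc n}
    (h : Tendsto (fun r => volume (S ∩ closedBall x r) / volume (closedBall x r))
      (nhdsWithin 0 (Set.Ioi 0)) (nhds 1)) : DensityOneAt S x := by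
  haveI : Nonempty (Fin n) := ⟨⟨0, hn⟩⟩
  haveI : Nontrivial (Euc n) := inferInstance
  apply h.congr'
  filter_upwards [self_mem_nhdsWithin] with r (hr : 0 < r)
  have hs : volume (sphere x r) = 0 := Measure.addHaar_sphere volume x r
  have h1 : volume (S ∩ closedBall x r) = volume (S ∩ ball x r) := by
    apply le_antisymm
    · calc volume (S ∩ closedBall x r) ≤ volume ((S ∩ ball x r) ∪ sphere x r) := by
            apply measure_mono
            rintro y ⟨hyS, hyc⟩
            rcases lt_or_eq_of_le (mem_closedBall.mp hyc) with h' | h'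
            · exact Or.inl ⟨hyS, h'⟩
            · exact Or.inr h'
        _ ≤ volume (S ∩ ball x r) + volume (sphere x r) := measure_union_le _ _
        _ = volume (S ∩ ball x r) := by rw [hs, add_zero]
    · exact measure_mono (Set.inter_subset_inter_right _ ball_subset_closedBall)
  have h2 : volume (closedBall x r) = volume (ball x r) :=
    Measure.addHaar_closedBall_eq_addHaar_ball (μ := (volume : Measure (Euc n))) x r
  rw [h1, h2]

lemma densityZero_subset (hn : 0 < n) {S T : Set (Euc n)} {x : Euc n}
    (h : S ⊆ T) (hT : DensityZeroAt T x) : DensityZeroAt S x :=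
  densityOne_mono hn (Set.compl_subset_compl.2 h) hT

lemma partB (hn : 0 < n) {k : ℕ} {f : Euc n → ℝ} (hf : Measurable f) {h : ℕ}
    {x₀ : Euc n} {p : Euc n → ℝ}
    (dE : DensityOneAt {x : Euc n | -(h : ℝ) < f x ∧ f x < (h : ℝ)} x₀)
    (hap : ApproxDiffAt k Set.univ f x₀ p) :
    ApproxDiffAt k Set.univ (trunc h f) x₀ p := by
  obtain ⟨-, hpoly, hbad⟩ := hap
  refine ⟨densityOne_univ hn x₀, hpoly, fun ε hε => ?_⟩
  have hE : MeasurableSet {x : Euc n | -(h : ℝ) < f x ∧ f x < (h : ℝ)} := by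
    have : {x : Euc n | -(h : ℝ) < f x ∧ f x < (h : ℝ)}
        = f ⁻¹' (Set.Ioo (-(h : ℝ)) (h : ℝ)) := rfl
    rw [this]; exact hf measurableSet_Ioo
  unfold DensityZeroAt
  apply densityOne_mono hn
    (S := {x : Euc n | -(h : ℝ) < f x ∧ f x < (h : ℝ)}
      ∩ {x | x ∈ Set.univ ∧ ε * ‖x - x₀‖ ^ k < |f x - p x|}ᶜ)
  · rintro x ⟨hxE, hxb⟩
    simp only [Set.mem_compl_iff, Set.mem_setOf_eq] at hxb ⊢
    rintro ⟨-, hlt⟩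
    apply hxb
    refine ⟨trivial, ?_⟩
    have ht : trunc h f x = f x := by
      unfold trunc
      rw [if_neg (by linarith [hxE.2]), if_neg (by linarith [hxE.1])]
    rwa [ht] at hlt
  · exact densityOne_inter hn hE dE (hbad ε hε)

lemma constPoly (n k : ℕ) (c : ℝ) : IsPolyFun n k (fun _ => c) := by
  refine ⟨MvPolynomial.C c, ?_, ?_⟩
  · simp [MvPolynomial.totalDegree_C]
  · intro x; simp

lemma partConst (hn : 0 < n) {f : Euc n → ℝ} {h : ℕ} {x₀ : Euc n} {c : ℝ} {k : ℕ}
    {A : Set (Euc n)} (dA : DensityOneAt A x₀)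
    (hAc : ∀ x ∈ A, trunc h f x = c) :
    ApproxDiffAt k Set.univ (trunc h f) x₀ (fun _ => c) := by
  refine ⟨densityOne_univ hn x₀, constPoly n k c, fun ε hε => ?_⟩
  apply densityZero_subset hn (T := Aᶜ)
  · rintro x ⟨-, hlt⟩ hxA
    rw [hAc x hxA, sub_self, abs_zero] at hlt
    have : (0:ℝ) ≤ ε * ‖x - x₀‖ ^ k := by positivity
    linarith
  · unfold DensityZeroAt
    rwa [compl_compl]
/-- **Lemma 4.5** (truncation, abelian case). If `f` is approximately differentiable
of order `k` a.e., then (a) so is each truncation `f_h`; and (b) at any point where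
`{−h < f < h}` has density one, `f_h` has the same approximate derivative as `f`. -/
theorem stmt14 (n : ℕ) (hn : 0 < n) (k : ℕ) (f : Euc n → ℝ) (hf : Measurable f)
    (hdiff : ∀ᵐ x₀ ∂(volume : Measure (Euc n)),
      ∃ p : Euc n → ℝ, ApproxDiffAt k Set.univ f x₀ p)
    (h : ℕ) (hh : 1 ≤ h) :
    (∀ᵐ x₀ ∂(volume : Measure (Euc n)),
      ∃ p : Euc n → ℝ, ApproxDiffAt k Set.univ (trunc h f) x₀ p) ∧
    (∀ x₀ : Euc n, DensityOneAt {x : Euc n | -(h : ℝ) < f x ∧ f x < (h : ℝ)} x₀ →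
      ∀ p : Euc n → ℝ, ApproxDiffAt k Set.univ f x₀ p →
        ApproxDiffAt k Set.univ (trunc h f) x₀ p) := by
  have hE : MeasurableSet {x : Euc n | -(h : ℝ) < f x ∧ f x < (h : ℝ)} := by
    have : {x : Euc n | -(h : ℝ) < f x ∧ f x < (h : ℝ)}
        = f ⁻¹' (Set.Ioo (-(h : ℝ)) (h : ℝ)) := rfl
    rw [this]; exact hf measurableSet_Ioo
  have hP : MeasurableSet {x : Euc n | (h : ℝ) ≤ f x} := hf measurableSet_Ici
  have hM : MeasurableSet {x : Euc n | f x ≤ -(h : ℝ)} := hf measurableSet_Iic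
  constructor
  · filter_upwards [hdiff,
      Besicovitch.ae_tendsto_measure_inter_div_of_measurableSet volume hE,
      Besicovitch.ae_tendsto_measure_inter_div_of_measurableSet volume hP,
      Besicovitch.ae_tendsto_measure_inter_div_of_measurableSet volume hM]
      with x₀ hd dE dP dM
    by_cases h1 : (h : ℝ) ≤ f x₀
    · have dens : DensityOneAt {x : Euc n | (h : ℝ) ≤ f x} x₀ := by
        apply densityOne_of_closedBall hn
        rwa [Set.indicator_of_mem (show x₀ ∈ {x : Euc n | (h : ℝ) ≤ f x} from h1), Pi.one_apply] at dP
      exact ⟨fun _ => (h : ℝ), partConst hn dens (fun x hx => by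
        unfold trunc; rw [if_pos (show (h : ℝ) ≤ f x from hx)])⟩
    · by_cases h2 : f x₀ ≤ -(h : ℝ)
      · have dens : DensityOneAt {x : Euc n | f x ≤ -(h : ℝ)} x₀ := by
          apply densityOne_of_closedBall hn
          rwa [Set.indicator_of_mem (show x₀ ∈ {x : Euc n | f x ≤ -(h : ℝ)} from h2), Pi.one_apply] at dM
        refine ⟨fun _ => -(h : ℝ), partConst hn dens (fun x hx => ?_)⟩
        unfold trunc
        have hx' : f x ≤ -(h : ℝ) := hx
        have hh' : (1:ℝ) ≤ (h : ℝ) := by exact_mod_cast hh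
        have : f x ≤ -(h : ℝ) := hx
        rw [if_neg (by linarith), if_pos this]
      · have hx₀ : x₀ ∈ {x : Euc n | -(h : ℝ) < f x ∧ f x < (h : ℝ)} :=
          ⟨by linarith [not_le.mp h2], not_le.mp h1⟩
        have dens : DensityOneAt {x : Euc n | -(h : ℝ) < f x ∧ f x < (h : ℝ)} x₀ := by
          apply densityOne_of_closedBall hn
          rwa [Set.indicator_of_mem hx₀, Pi.one_apply] at dE
        obtain ⟨p, hp⟩ := hd
        exact ⟨p, partB hn hf dens hp⟩
  · exact fun x₀ dE p hap => partB hn hf dE hap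
end
end
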